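/- arXiv:2410.06909 — 3 statements merged into one kernel-verified Lean document; each statement's English description precedes it below -/
import Mathlib

section
/- Let E and F be pseudo-normed real vector spaces, s_0 < s < s_1 real numbers, q ∈ [1,∞), r > 0, and let Φ : B_{s,q}(0,r) → Σ^{s_0}_∞(F) satisfy the weak Lipschitz and tame estimates with constants C₀, C₁. Set κ = min(s_1−s, s−s_0), C = max{C₀, (1+2^{s_1−s})C₁} and A = 2/(1−2^{−κ}). For f ∈ B_{s,q}(0,r) set γ_p := 2^{−p(s_1−s)} ∑_{k=0}^p 2^{k s_1}‖f_k‖_E and c_p := γ_p + γ_{p+1}. Then for every n ∈ ℕ the sequence Φ(f) − Φ(S_n f) belongs to Σ^s_q(F) and ‖Φ(f) − Φ(S_n f)‖_{Σ^s_q(F)} ≤ A C (∑_{p≥n} c_p^q)^{1/q}; in particular ‖Φ(f) − Φ(S_n f)‖_{Σ^s_q(F)} → 0 as n → ∞. -/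
open Filter
open scoped ENNReal NNReal

set_option maxHeartbeats 1000000

namespace PhiAux

noncomputable def lq (q : ℝ) (f : ℕ → ℝ≥0∞) : ℝ≥0∞ := (∑' k, f k ^ q) ^ (1/q)

variable {q : ℝ}

lemma rpow_rpow_inv (hq : 0 < q) (x : ℝ≥0∞) : (x ^ q) ^ (1/q) = x := by
  rw [← ENNReal.rpow_mul, mul_one_div, div_self hq.ne', ENNReal.rpow_one]

lemma rpow_inv_rpow' (hq : 0 < q) (x : ℝ≥0∞) : (x ^ (1/q)) ^ q = x := by
  rw [← ENNReal.rpow_mul, one_div_mul_cancel hq.ne', ENNReal.rpow_one]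

lemma lq_mono (hq : 1 ≤ q) {f g : ℕ → ℝ≥0∞} (h : ∀ k, f k ≤ g k) : lq q f ≤ lq q g := by
  have hq0 : (0:ℝ) < q := lt_of_lt_of_le one_pos hq
  unfold lq
  gcongr with k
  exact h k

lemma lq_add_le (hq : 1 ≤ q) (f g : ℕ → ℝ≥0∞) :
    lq q (fun k => f k + g k) ≤ lq q f + lq q g := by
  have hq0 : (0:ℝ) < q := lt_of_lt_of_le one_pos hq
  unfold lq
  rw [(show ∀ x y : ℝ≥0∞, x ^ (1/q) ≤ y ↔ x ≤ y ^ q from fun x y => by rw [one_div]; exact ENNReal.rpow_inv_le_iff hq0), ENNReal.tsum_eq_iSup_sum]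
  refine iSup_le fun t => ?_
  rw [← (show ∀ x y : ℝ≥0∞, x ^ (1/q) ≤ y ↔ x ≤ y ^ q from fun x y => by rw [one_div]; exact ENNReal.rpow_inv_le_iff hq0)]
  calc (∑ k ∈ t, (f k + g k) ^ q) ^ (1/q)
      ≤ (∑ k ∈ t, f k ^ q) ^ (1/q) + (∑ k ∈ t, g k ^ q) ^ (1/q) := ENNReal.Lp_add_le t f g hq
    _ ≤ (∑' k, f k ^ q) ^ (1/q) + (∑' k, g k ^ q) ^ (1/q) := by
        gcongr <;> exact ENNReal.sum_le_tsum t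

lemma lq_sum_le (hq : 1 ≤ q) {ι : Type*} (t : Finset ι) (F : ι → ℕ → ℝ≥0∞) :
    lq q (fun k => ∑ j ∈ t, F j k) ≤ ∑ j ∈ t, lq q (F j) := by
  have hq0 : (0:ℝ) < q := lt_of_lt_of_le one_pos hq
  induction t using Finset.cons_induction with
  | empty => simp [lq, ENNReal.zero_rpow_of_pos, hq0, one_div_pos.2 hq0]
  | cons a t ha ih =>
    simp only [Finset.sum_cons]
    exact (lq_add_le hq _ _).trans (by gcongr)

lemma iSup_rpow_nat (hq : 0 < q) (x : ℕ → ℝ≥0∞) : (⨆ m, x m) ^ q = ⨆ m, x m ^ q := by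
  refine le_antisymm ?_ (iSup_le fun m => ENNReal.rpow_le_rpow (le_iSup x m) hq.le)
  have h1 : ∀ m, x m ≤ (⨆ m, x m ^ q) ^ (1/q) := fun m => by
    rw [← rpow_rpow_inv hq (x m)]
    exact ENNReal.rpow_le_rpow (le_iSup (fun m => x m ^ q) m) (by positivity)
  calc (⨆ m, x m) ^ q ≤ ((⨆ m, x m ^ q) ^ (1/q)) ^ q :=
        ENNReal.rpow_le_rpow (iSup_le h1) hq.le
    _ = ⨆ m, x m ^ q := rpow_inv_rpow' hq _

lemma tsum_iSup_of_monotone {H : ℕ → ℕ → ℝ≥0∞} (hH : ∀ k, Monotone fun m => H m k) :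
    ∑' k, ⨆ m, H m k = ⨆ m, ∑' k, H m k := by
  refine le_antisymm ?_ (iSup_le fun m => ENNReal.tsum_le_tsum fun k => le_iSup (fun m => H m k) m)
  rw [ENNReal.tsum_eq_iSup_sum]
  refine iSup_le fun t => ?_
  rw [ENNReal.finsetSum_iSup_of_monotone hH]
  exact iSup_le fun m => le_iSup_of_le m (ENNReal.sum_le_tsum t)

lemma lq_tsum_le (hq : 1 ≤ q) (F : ℕ → ℕ → ℝ≥0∞) :
    lq q (fun k => ∑' j, F j k) ≤ ∑' j, lq q (F j) := by
  have hq0 : (0:ℝ) < q := lt_of_lt_of_le one_pos hq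
  unfold lq
  rw [(show ∀ x y : ℝ≥0∞, x ^ (1/q) ≤ y ↔ x ≤ y ^ q from fun x y => by rw [one_div]; exact ENNReal.rpow_inv_le_iff hq0)]
  have h1 : ∀ k, (∑' j, F j k) = ⨆ m, ∑ j ∈ Finset.range m, F j k := fun k =>
    ENNReal.tsum_eq_iSup_sum' _ Finset.exists_nat_subset_range
  calc ∑' k, (∑' j, F j k) ^ q
      = ∑' k, ⨆ m, (∑ j ∈ Finset.range m, F j k) ^ q := by
        refine tsum_congr fun k => ?_
        rw [h1 k, iSup_rpow_nat hq0]
    _ = ⨆ m, ∑' k, (∑ j ∈ Finset.range m, F j k) ^ q :=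
        tsum_iSup_of_monotone fun k => fun m m' hm =>
          ENNReal.rpow_le_rpow
            (Finset.sum_le_sum_of_subset (Finset.range_subset_range.2 hm)) hq0.le
    _ ≤ ((∑' j, lq q (F j)) ^ q) := iSup_le fun m => by
        have h2 := lq_sum_le hq (Finset.range m) F
        have h3 : (∑ j ∈ Finset.range m, lq q (F j)) ≤ ∑' j, lq q (F j) :=
          ENNReal.sum_le_tsum _
        have := ENNReal.rpow_le_rpow (h2.trans h3) hq0.le
        rwa [lq, rpow_inv_rpow' hq0] at this

lemma lq_const_mul (hq : 0 < q) (a : ℝ≥0∞) (f : ℕ → ℝ≥0∞) :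
    lq q (fun k => a * f k) = a * lq q f := by
  unfold lq
  simp_rw [ENNReal.mul_rpow_of_nonneg _ _ hq.le, ENNReal.tsum_mul_left]
  rw [ENNReal.mul_rpow_of_nonneg _ _ (by positivity), rpow_rpow_inv hq]

lemma tsum_shift {v : ℕ → ℝ≥0∞} (k : ℕ) (h : ∀ p, p < k → v p = 0) :
    ∑' p, v p = ∑' j, v (j + k) := by
  refine (Function.Injective.tsum_eq (g := fun j => j + k) (add_left_injective k) ?_).symm
  intro p hp
  rcases le_or_gt k p with hk | hk
  · exact ⟨p - k, by simp; omega⟩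
  · exact absurd (h p hk) hp

/-- `|k - p|` as a natural number. -/
def distN (k p : ℕ) : ℕ := (k - p) + (p - k)

lemma lq_shift_le (hq : 0 < q) (d : ℕ → ℝ≥0∞) (j : ℕ) :
    (∑' k, d (k + j) ^ q) ≤ ∑' k, d k ^ q :=
  ENNReal.tsum_comp_le_tsum_of_injective (add_left_injective j) (fun p => d p ^ q)

/-- Key convolution bound (Schur test / Young): the `ℓ^q` norm of
`k ↦ ∑_p λ^{|k-p|} d p` is at most `2 (1-λ)⁻¹` times the `ℓ^q` norm of `d`. -/
lemma lq_conv_le (hq : 1 ≤ q) (lam : ℝ≥0∞) (d : ℕ → ℝ≥0∞) :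
    lq q (fun k => ∑' p, lam ^ distN k p * d p) ≤ 2 * (1 - lam)⁻¹ * lq q d := by
  have hq0 : (0:ℝ) < q := lt_of_lt_of_le one_pos hq
  set F1 : ℕ → ℕ → ℝ≥0∞ := fun j k => lam ^ j * (if j ≤ k then d (k - j) else 0) with hF1
  set F2 : ℕ → ℕ → ℝ≥0∞ := fun j k => lam ^ j * d (k + j) with hF2
  have hpt : ∀ k, (∑' p, lam ^ distN k p * d p) ≤ ∑' j, (F1 j k + F2 j k) := by
    intro k
    rw [ENNReal.tsum_add]
    have step1 : (∑' p, lam ^ distN k p * d p) ≤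
        (∑' p, (if p ≤ k then lam ^ (k - p) * d p else 0)) +
        (∑' p, (if k ≤ p then lam ^ (p - k) * d p else 0)) := by
      rw [← ENNReal.tsum_add]
      refine ENNReal.tsum_le_tsum fun p => ?_
      rcases le_total p k with h | h
      · have : distN k p = k - p := by simp [distN, Nat.sub_eq_zero_of_le h]
        rw [this, if_pos h]
        exact le_add_right le_rfl
      · have : distN k p = p - k := by simp [distN, Nat.sub_eq_zero_of_le h]
        rw [this, if_pos h]
        exact le_add_left le_rfl
    have e1 : (∑' p, (if p ≤ k then lam ^ (k - p) * d p else 0)) ≤ ∑' j, F1 j k := by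
      have t1 : (∑' p, (if p ≤ k then lam ^ (k - p) * d p else 0)) =
          ∑ p ∈ Finset.range (k + 1), lam ^ (k - p) * d p := by
        rw [tsum_eq_sum (s := Finset.range (k+1))]
        · exact Finset.sum_congr rfl fun p hp => if_pos (Nat.lt_succ_iff.1 (Finset.mem_range.1 hp))
        · intro p hp
          exact if_neg (fun h => hp (Finset.mem_range.2 (Nat.lt_succ_iff.2 h)))
      have t2 : (∑ p ∈ Finset.range (k + 1), lam ^ (k - p) * d p) =
          ∑ j ∈ Finset.range (k + 1), F1 j k := by
        rw [← Finset.sum_range_reflect (fun p => lam ^ (k - p) * d p) (k+1)]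
        refine Finset.sum_congr rfl fun j hj => ?_
        have hjk : j ≤ k := Nat.lt_succ_iff.1 (Finset.mem_range.1 hj)
        simp only [hF1, Nat.add_sub_cancel]
        rw [if_pos hjk, Nat.sub_sub_self hjk]
      rw [t1, t2]
      exact ENNReal.sum_le_tsum _
    have e2 : (∑' p, (if k ≤ p then lam ^ (p - k) * d p else 0)) ≤ ∑' j, F2 j k := by
      rw [tsum_shift (v := fun p => (if k ≤ p then lam ^ (p - k) * d p else 0)) k
        (fun p hp => if_neg (not_le.2 hp))]
      refine ENNReal.tsum_le_tsum fun j => ?_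
      rw [if_pos (Nat.le_add_left k j), Nat.add_sub_cancel]
      simp [hF2, add_comm]
    exact step1.trans (add_le_add e1 e2)
  have hn1 : ∀ j, lq q (F1 j) ≤ lam ^ j * lq q d := by
    intro j
    rw [hF1]
    simp only []
    rw [lq_const_mul hq0]
    gcongr
    unfold lq
    refine ENNReal.rpow_le_rpow ?_ (by positivity)
    calc (∑' k, (if j ≤ k then d (k - j) else 0) ^ q)
        = ∑' k, (if j ≤ k then d (k - j) ^ q else 0) := by
          refine tsum_congr fun k => ?_
          split
          · rfl
          · exact ENNReal.zero_rpow_of_pos hq0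
      _ ≤ ∑' k, d k ^ q := by
          rw [tsum_shift (v := fun k => (if j ≤ k then d (k - j) ^ q else 0)) j
            (fun p hp => if_neg (not_le.2 hp))]
          calc (∑' i, (if j ≤ i + j then d (i + j - j) ^ q else 0))
              = ∑' i, d i ^ q := by
                refine tsum_congr fun i => ?_
                rw [if_pos (Nat.le_add_left j i), Nat.add_sub_cancel]
            _ ≤ ∑' k, d k ^ q := le_rfl
  have hn2 : ∀ j, lq q (F2 j) ≤ lam ^ j * lq q d := by
    intro j
    rw [hF2]
    simp only []
    rw [lq_const_mul hq0]
    gcongr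
    unfold lq
    exact ENNReal.rpow_le_rpow (lq_shift_le hq0 d j) (by positivity)
  calc lq q (fun k => ∑' p, lam ^ distN k p * d p)
      ≤ lq q (fun k => ∑' j, (F1 j k + F2 j k)) := lq_mono hq hpt
    _ ≤ ∑' j, lq q (fun k => F1 j k + F2 j k) := lq_tsum_le hq _
    _ ≤ ∑' j, (lq q (F1 j) + lq q (F2 j)) :=
        ENNReal.tsum_le_tsum fun j => lq_add_le hq _ _
    _ ≤ ∑' j, (lam ^ j * lq q d + lam ^ j * lq q d) :=
        ENNReal.tsum_le_tsum fun j => add_le_add (hn1 j) (hn2 j)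
    _ = 2 * (1 - lam)⁻¹ * lq q d := by
        simp_rw [← two_mul]
        rw [ENNReal.tsum_mul_left, ENNReal.tsum_mul_right, ENNReal.tsum_geometric, mul_assoc]

end PhiAux


/-- A pseudo-norm on a real vector space: nonnegative, symmetric, subadditive,
and vanishing exactly at `0`. -/
structure IsPseudoNorm {E : Type*} [AddCommGroup E] [Module ℝ E] (N : E → ℝ) : Prop where
  nonneg : ∀ x, 0 ≤ N x
  neg : ∀ x, N (-x) = N x
  add_le : ∀ x y, N (x + y) ≤ N x + N y
  eq_zero_iff : ∀ x, N x = 0 ↔ x = 0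

/-- The `Σ^s_q(E)` pseudo-norm of a sequence `f : ℕ → E`:
`(∑_k 2^{qks} ‖f_k‖_E^q)^{1/q}` for `q < ∞` and `sup_k 2^{ks} ‖f_k‖_E` for `q = ∞`. -/
noncomputable def sigmaNorm {E : Type*} (N : E → ℝ) (s : ℝ) (q : ℝ≥0∞) (f : ℕ → E) : ℝ≥0∞ :=
  if q = ⊤ then ⨆ k : ℕ, ENNReal.ofReal ((2 : ℝ) ^ ((k : ℝ) * s) * N (f k))
  else (∑' k : ℕ, ENNReal.ofReal ((2 : ℝ) ^ ((k : ℝ) * s) * N (f k)) ^ q.toReal) ^ (1 / q.toReal)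

/-- Membership in `Σ^s_q(E)`: finiteness of the norm when `q < ∞`, and
`2^{ks}‖f_k‖_E → 0` when `q = ∞`. -/
def memSigma {E : Type*} (N : E → ℝ) (s : ℝ) (q : ℝ≥0∞) (f : ℕ → E) : Prop :=
  if q = ⊤ then Tendsto (fun k : ℕ => (2 : ℝ) ^ ((k : ℝ) * s) * N (f k)) atTop (nhds 0)
  else sigmaNorm N s q f < ⊤

/-- Friedrichs smoothing operator `S_n`: truncation of a sequence after index `n`. -/
def smoothS {E : Type*} [Zero E] (n : ℕ) (f : ℕ → E) : ℕ → E :=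
  fun k => if k ≤ n then f k else 0

namespace PhiAux

lemma sigmaNorm_ofReal {G : Type*} (N : G → ℝ) (σ : ℝ) {q : ℝ} (hq : 0 ≤ q) (v : ℕ → G) :
    sigmaNorm N σ (ENNReal.ofReal q) v
      = lq q (fun k => ENNReal.ofReal ((2:ℝ) ^ ((k:ℝ) * σ) * N (v k))) := by
  rw [sigmaNorm, if_neg ENNReal.ofReal_ne_top, ENNReal.toReal_ofReal hq, lq]

lemma sigmaNorm_one {G : Type*} (N : G → ℝ) (σ : ℝ) (v : ℕ → G) :
    sigmaNorm N σ 1 v = ∑' k : ℕ, ENNReal.ofReal ((2:ℝ) ^ ((k:ℝ) * σ) * N (v k)) := by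
  rw [sigmaNorm, if_neg ENNReal.one_ne_top]
  simp [ENNReal.toReal_one]

lemma sigmaNorm_top {G : Type*} (N : G → ℝ) (σ : ℝ) (v : ℕ → G) :
    sigmaNorm N σ ⊤ v = ⨆ k : ℕ, ENNReal.ofReal ((2:ℝ) ^ ((k:ℝ) * σ) * N (v k)) := if_pos rfl

lemma memSigma_ofReal {G : Type*} (N : G → ℝ) (σ : ℝ) (q : ℝ) (v : ℕ → G) :
    memSigma N σ (ENNReal.ofReal q) v ↔ sigmaNorm N σ (ENNReal.ofReal q) v < ⊤ := by
  rw [memSigma, if_neg ENNReal.ofReal_ne_top]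

lemma memSigma_one {G : Type*} (N : G → ℝ) (σ : ℝ) (v : ℕ → G) :
    memSigma N σ 1 v ↔ sigmaNorm N σ 1 v < ⊤ := by
  rw [memSigma, if_neg ENNReal.one_ne_top]

end PhiAux

/-- Estimate (3.13): with `κ = min(s₁-s, s-s₀)`, `C = max(C₀, (1+2^{s₁-s})C₁)` and
`A = 2/(1-2^{-κ})`, for `f ∈ B_{s,q}(0,r)` (with `q ∈ [1,∞)`),
`γ_p := 2^{-p(s₁-s)} ∑_{k≤p} 2^{k s₁}‖f_k‖_E` and `c_p := γ_p + γ_{p+1}`, the sequence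
`Φ(f) - Φ(S_n f)` belongs to `Σ^s_q(F)` with
`‖Φ(f) - Φ(S_n f)‖_{Σ^s_q} ≤ A C (∑_{p≥n} c_p^q)^{1/q}`, and this tends to `0`. -/
theorem Phi_smoothS_tail_bound
    {E F : Type*} [AddCommGroup E] [Module ℝ E] [AddCommGroup F] [Module ℝ F]
    (NE : E → ℝ) (NF : F → ℝ) (hNE : IsPseudoNorm NE) (hNF : IsPseudoNorm NF)
    (s₀ s s₁ : ℝ) (hs₀ : s₀ < s) (hs₁ : s < s₁)
    (q : ℝ) (hq : 1 ≤ q) (r : ℝ) (hr : 0 < r)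
    (Φ : (ℕ → E) → (ℕ → F))
    (hΦmem : ∀ v, memSigma NE s (ENNReal.ofReal q) v →
      sigmaNorm NE s (ENNReal.ofReal q) v < ENNReal.ofReal r →
      memSigma NF s₀ ⊤ (Φ v))
    (C₀ : ℝ) (hC₀ : 0 < C₀)
    (hlip : ∀ v w, memSigma NE s (ENNReal.ofReal q) v →
      sigmaNorm NE s (ENNReal.ofReal q) v < ENNReal.ofReal r →
      memSigma NE s (ENNReal.ofReal q) w →
      sigmaNorm NE s (ENNReal.ofReal q) w < ENNReal.ofReal r →
      sigmaNorm NF s₀ ⊤ (Φ v - Φ w) ≤ ENNReal.ofReal C₀ * sigmaNorm NE s₀ 1 (v - w))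
    (C₁ : ℝ) (hC₁ : 0 < C₁)
    (htame : ∀ v, (∀ σ : ℝ, memSigma NE σ 1 v) →
      memSigma NE s (ENNReal.ofReal q) v →
      sigmaNorm NE s (ENNReal.ofReal q) v < ENNReal.ofReal r →
      sigmaNorm NF s₁ ⊤ (Φ v) ≤ ENNReal.ofReal C₁ * sigmaNorm NE s₁ 1 v)
    (κ C A : ℝ) (hκ : κ = min (s₁ - s) (s - s₀))
    (hC : C = max C₀ ((1 + (2 : ℝ) ^ (s₁ - s)) * C₁))
    (hA : A = 2 / (1 - (2 : ℝ) ^ (-κ)))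
    (f : ℕ → E) (hfmem : memSigma NE s (ENNReal.ofReal q) f)
    (hfball : sigmaNorm NE s (ENNReal.ofReal q) f < ENNReal.ofReal r)
    (γ c : ℕ → ℝ)
    (hγ : ∀ p : ℕ, γ p = (2 : ℝ) ^ (-((p : ℝ) * (s₁ - s))) *
      ∑ k ∈ Finset.range (p + 1), (2 : ℝ) ^ ((k : ℝ) * s₁) * NE (f k))
    (hc : ∀ p : ℕ, c p = γ p + γ (p + 1)) :
    (∀ n : ℕ,
      memSigma NF s (ENNReal.ofReal q) (Φ f - Φ (smoothS n f)) ∧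
      sigmaNorm NF s (ENNReal.ofReal q) (Φ f - Φ (smoothS n f))
        ≤ ENNReal.ofReal (A * C) *
            (∑' p : ℕ, ENNReal.ofReal (c (n + p)) ^ q) ^ (1 / q)) ∧
    Tendsto (fun n : ℕ => sigmaNorm NF s (ENNReal.ofReal q) (Φ f - Φ (smoothS n f)))
      atTop (nhds 0) := by
  classical
  open PhiAux in
  have hNE0 : NE 0 = 0 := (hNE.eq_zero_iff 0).2 rfl
  have hNF0 : NF 0 = 0 := (hNF.eq_zero_iff 0).2 rfl
  have hq0 : (0:ℝ) < q := lt_of_lt_of_le one_pos hq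
  have hκpos : 0 < κ := by rw [hκ]; exact lt_min (by linarith) (by linarith)
  have hκ1 : κ ≤ s₁ - s := hκ ▸ min_le_left _ _
  have hκ0 : κ ≤ s - s₀ := hκ ▸ min_le_right _ _
  have h2κ0 : (0:ℝ) < (2:ℝ) ^ (-κ) := Real.rpow_pos_of_pos two_pos _
  have h2κ1 : (2:ℝ) ^ (-κ) < 1 :=
    Real.rpow_lt_one_of_one_lt_of_neg one_lt_two (by linarith)
  have hCpos : (0:ℝ) < C := lt_of_lt_of_le hC₀ (hC ▸ le_max_left _ _)
  have hApos : (0:ℝ) < A := by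
    have : (0:ℝ) < 1 - (2:ℝ) ^ (-κ) := by linarith
    rw [hA]; positivity
  -- the basic sequence e
  set e : ℕ → ℝ≥0∞ := fun k => ENNReal.ofReal ((2:ℝ) ^ ((k:ℝ) * s) * NE (f k)) with he
  have hfnorm : sigmaNorm NE s (ENNReal.ofReal q) f = PhiAux.lq q e :=
    PhiAux.sigmaNorm_ofReal NE s hq0.le f
  have hterm_nonneg : ∀ (σ : ℝ) (k : ℕ) (x : E), 0 ≤ (2:ℝ) ^ ((k:ℝ) * σ) * NE x :=
    fun σ k x => mul_nonneg (Real.rpow_nonneg two_pos.le _) (hNE.nonneg x)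
  have hek : ∀ k : ℕ, (2:ℝ) ^ ((k:ℝ) * s) * NE (f k) ≤ r := by
    intro k
    have h1 : PhiAux.lq q e ≤ ENNReal.ofReal r := hfnorm ▸ hfball.le
    have h2 : (∑' k, e k ^ q) ≤ ENNReal.ofReal r ^ q := by
      have := ENNReal.rpow_le_rpow h1 hq0.le
      rwa [PhiAux.lq, PhiAux.rpow_inv_rpow' hq0] at this
    have h3 : e k ^ q ≤ ENNReal.ofReal r ^ q := (ENNReal.le_tsum k).trans h2
    have h4 : e k ≤ ENNReal.ofReal r := (ENNReal.rpow_le_rpow_iff hq0).1 h3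
    exact (ENNReal.ofReal_le_ofReal_iff hr.le).1 h4
  -- smoothing operators stay in the ball
  have hsm_le : ∀ m k, NE (smoothS m f k) ≤ NE (f k) := by
    intro m k
    unfold smoothS
    split
    · exact le_rfl
    · rw [hNE0]; exact hNE.nonneg _
  have hball_m : ∀ m, sigmaNorm NE s (ENNReal.ofReal q) (smoothS m f) < ENNReal.ofReal r := by
    intro m
    refine lt_of_le_of_lt ?_ hfball
    rw [hfnorm, PhiAux.sigmaNorm_ofReal NE s hq0.le]
    refine PhiAux.lq_mono hq fun k => ?_
    exact ENNReal.ofReal_le_ofReal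
      (mul_le_mul_of_nonneg_left (hsm_le m k) (Real.rpow_nonneg two_pos.le _))
  have hmem_m : ∀ m, memSigma NE s (ENNReal.ofReal q) (smoothS m f) := fun m =>
    (PhiAux.memSigma_ofReal NE s q _).2 (lt_trans (hball_m m) ENNReal.ofReal_lt_top)
  have hσ1 : ∀ m (σ : ℝ), memSigma NE σ 1 (smoothS m f) := by
    intro m σ
    refine (PhiAux.memSigma_one NE σ _).2 ?_
    rw [PhiAux.sigmaNorm_one]
    rw [tsum_eq_sum (s := Finset.range (m+1)) (fun k hk => ?_)]
    · exact ENNReal.sum_lt_top.2 fun k _ => ENNReal.ofReal_lt_top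
    · have hk' : ¬ k ≤ m := fun h => hk (Finset.mem_range.2 (Nat.lt_succ_iff.2 h))
      simp [smoothS, hk', hNE0]
  -- partial sums Sig
  set Sig : ℕ → ℝ := fun p => ∑ k ∈ Finset.range (p+1), (2:ℝ) ^ ((k:ℝ) * s₁) * NE (f k)
    with hSig
  have hSig0 : ∀ p, 0 ≤ Sig p := fun p =>
    Finset.sum_nonneg fun k _ => hterm_nonneg s₁ k (f k)
  have hγSig : ∀ p, γ p = (2:ℝ) ^ (-((p:ℝ) * (s₁ - s))) * Sig p := hγ
  have hγ0 : ∀ p, 0 ≤ γ p := fun p => by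
    rw [hγSig p]
    exact mul_nonneg (Real.rpow_nonneg two_pos.le _) (hSig0 p)
  have hc0 : ∀ p, 0 ≤ c p := fun p => by rw [hc p]; exact add_nonneg (hγ0 p) (hγ0 _)
  have hSigγ : ∀ p, Sig p = (2:ℝ) ^ ((p:ℝ) * (s₁ - s)) * γ p := by
    intro p
    rw [hγSig p, ← mul_assoc, ← Real.rpow_add two_pos]
    simp
  -- γ (p+1) dominates the (p+1)-st term
  have hγlast : ∀ p : ℕ, (2:ℝ) ^ (((p:ℝ)+1) * s) * NE (f (p+1)) ≤ γ (p+1) := by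
    intro p
    have hterm : (2:ℝ) ^ ((((p+1):ℕ):ℝ) * s₁) * NE (f (p+1)) ≤ Sig (p+1) :=
      Finset.single_le_sum (f := fun k : ℕ => (2:ℝ) ^ ((k:ℝ) * s₁) * NE (f k))
        (fun k _ => hterm_nonneg s₁ k (f k)) (Finset.self_mem_range_succ (p+1))
    rw [hγSig (p+1)]
    have := mul_le_mul_of_nonneg_left hterm
      (Real.rpow_nonneg two_pos.le (-((((p+1):ℕ):ℝ) * (s₁ - s))))
    refine le_trans (le_of_eq ?_) this
    rw [← mul_assoc, ← Real.rpow_add two_pos]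
    push_cast
    ring_nf
  -- norm of smoothS p f in Σ^{s₁}_1
  have hsig1norm : ∀ p, sigmaNorm NE s₁ 1 (smoothS p f) = ENNReal.ofReal (Sig p) := by
    intro p
    rw [PhiAux.sigmaNorm_one]
    rw [tsum_eq_sum (s := Finset.range (p+1)) (fun k hk => ?_)]
    · rw [hSig, ENNReal.ofReal_sum_of_nonneg (fun k _ => hterm_nonneg s₁ k (f k))]
      refine Finset.sum_congr rfl fun k hk => ?_
      have : k ≤ p := Nat.lt_succ_iff.1 (Finset.mem_range.1 hk)
      simp [smoothS, this]
    · have hk' : ¬ k ≤ p := fun h => hk (Finset.mem_range.2 (Nat.lt_succ_iff.2 h))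
      simp [smoothS, hk', hNE0]
  -- tame estimate, real form
  have htameR : ∀ p k : ℕ, (2:ℝ) ^ ((k:ℝ) * s₁) * NF (Φ (smoothS p f) k) ≤ C₁ * Sig p := by
    intro p k
    have h := htame (smoothS p f) (fun σ => hσ1 p σ) (hmem_m p) (hball_m p)
    rw [PhiAux.sigmaNorm_top, hsig1norm, ← ENNReal.ofReal_mul hC₁.le] at h
    have h2 := (le_iSup (fun k : ℕ =>
      ENNReal.ofReal ((2:ℝ) ^ ((k:ℝ) * s₁) * NF (Φ (smoothS p f) k))) k).trans h
    exact (ENNReal.ofReal_le_ofReal_iff (mul_nonneg hC₁.le (hSig0 p))).1 h2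
  -- difference of consecutive smoothings
  have hDiff : ∀ p : ℕ, (smoothS (p+1) f - smoothS p f) =
      fun k => if k = p+1 then f (p+1) else 0 := by
    intro p
    funext k
    simp only [Pi.sub_apply, smoothS]
    rcases eq_or_ne k (p+1) with rfl | hk
    · simp
    · rcases le_or_gt k p with h | h
      · simp [h, Nat.le_succ_of_le h, hk]
      · have h1 : ¬ k ≤ p := not_le.2 h
        have h2 : ¬ k ≤ p + 1 := fun hh => hk (le_antisymm hh h)
        simp [h1, h2, hk]
  have hlipnorm : ∀ p : ℕ, sigmaNorm NE s₀ 1 (smoothS (p+1) f - smoothS p f)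
      = ENNReal.ofReal ((2:ℝ) ^ ((((p+1):ℕ):ℝ) * s₀) * NE (f (p+1))) := by
    intro p
    rw [hDiff p, PhiAux.sigmaNorm_one]
    rw [tsum_eq_single (p+1) (fun k hk => ?_)]
    · simp
    · simp [hk, hNE0]
  -- weak Lipschitz estimate for consecutive smoothings, real form
  have hlipR : ∀ p k : ℕ,
      (2:ℝ) ^ ((k:ℝ) * s₀) * NF ((Φ (smoothS (p+1) f) - Φ (smoothS p f)) k)
        ≤ C₀ * ((2:ℝ) ^ ((((p+1):ℕ):ℝ) * s₀) * NE (f (p+1))) := by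
    intro p k
    have h := hlip (smoothS (p+1) f) (smoothS p f) (hmem_m (p+1)) (hball_m (p+1))
      (hmem_m p) (hball_m p)
    rw [PhiAux.sigmaNorm_top, hlipnorm, ← ENNReal.ofReal_mul hC₀.le] at h
    have h2 := (le_iSup (fun k : ℕ => ENNReal.ofReal ((2:ℝ) ^ ((k:ℝ) * s₀) *
      NF ((Φ (smoothS (p+1) f) - Φ (smoothS p f)) k))) k).trans h
    exact (ENNReal.ofReal_le_ofReal_iff
      (mul_nonneg hC₀.le (hterm_nonneg s₀ (p+1) (f (p+1))))).1 h2
  -- the componentwise key estimate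
  set u : ℕ → ℕ → ℝ := fun p k => NF ((Φ (smoothS (p+1) f) - Φ (smoothS p f)) k) with hu
  have hu0 : ∀ p k, 0 ≤ u p k := fun p k => hNF.nonneg _
  have hpow : ∀ d : ℕ, ((2:ℝ) ^ (-κ)) ^ d = (2:ℝ) ^ (-(κ * (d:ℝ))) := by
    intro d
    rw [← Real.rpow_natCast ((2:ℝ) ^ (-κ)) d, ← Real.rpow_mul two_pos.le]
    ring_nf
  have hkey : ∀ p k : ℕ, (2:ℝ) ^ ((k:ℝ) * s) * u p k
      ≤ C * c p * ((2:ℝ) ^ (-κ)) ^ (PhiAux.distN k p) := by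
    intro p k
    rcases le_or_gt k p with hkp | hkp
    · -- low frequencies: use the Lipschitz bound
      have hd : PhiAux.distN k p = p - k := by simp [PhiAux.distN, Nat.sub_eq_zero_of_le hkp]
      have hcast : ((p - k : ℕ):ℝ) = (p:ℝ) - (k:ℝ) := Nat.cast_sub hkp
      rw [hd, hpow, hcast]
      set D : ℝ := (2:ℝ) ^ (-(κ * ((p:ℝ) - (k:ℝ)))) with hD
      have hD0 : (0:ℝ) < D := Real.rpow_pos_of_pos two_pos _
      have hsplit : (2:ℝ)^((k:ℝ)*s) = (2:ℝ)^((k:ℝ)*(s-s₀)) * (2:ℝ)^((k:ℝ)*s₀) := by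
        rw [← Real.rpow_add two_pos]; congr 1; ring
      have H1 : (2:ℝ)^((k:ℝ)*s) * u p k
          ≤ C₀ * ((2:ℝ)^(((k:ℝ)-((p:ℝ)+1))*(s-s₀)) * ((2:ℝ)^(((p:ℝ)+1)*s) * NE (f (p+1)))) := by
        calc (2:ℝ)^((k:ℝ)*s) * u p k
            = (2:ℝ)^((k:ℝ)*(s-s₀)) * ((2:ℝ)^((k:ℝ)*s₀) * u p k) := by rw [hsplit]; ring
          _ ≤ (2:ℝ)^((k:ℝ)*(s-s₀)) * (C₀ * ((2:ℝ)^((((p+1):ℕ):ℝ)*s₀) * NE (f (p+1)))) :=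
              mul_le_mul_of_nonneg_left (hlipR p k) (Real.rpow_nonneg two_pos.le _)
          _ = C₀ * NE (f (p+1)) * (2:ℝ)^((k:ℝ)*(s-s₀) + ((p:ℝ)+1)*s₀) := by
              rw [Real.rpow_add two_pos]; push_cast; ring
          _ = C₀ * NE (f (p+1)) * (2:ℝ)^(((k:ℝ)-((p:ℝ)+1))*(s-s₀) + ((p:ℝ)+1)*s) := by
              rw [show (k:ℝ)*(s-s₀) + ((p:ℝ)+1)*s₀
                = ((k:ℝ)-((p:ℝ)+1))*(s-s₀) + ((p:ℝ)+1)*s by ring]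
          _ = C₀ * ((2:ℝ)^(((k:ℝ)-((p:ℝ)+1))*(s-s₀)) * ((2:ℝ)^(((p:ℝ)+1)*s) * NE (f (p+1)))) := by
              rw [Real.rpow_add two_pos]; ring
      have hNEγ : (2:ℝ)^(((p:ℝ)+1)*s) * NE (f (p+1)) ≤ c p :=
        (hγlast p).trans (by rw [hc p]; linarith [hγ0 p])
      have HE : (2:ℝ)^(((k:ℝ)-((p:ℝ)+1))*(s-s₀)) ≤ D := by
        rw [hD]
        refine Real.rpow_le_rpow_of_exponent_le one_le_two ?_
        have hx0 : (0:ℝ) ≤ (p:ℝ) - (k:ℝ) := by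
          have : (k:ℝ) ≤ (p:ℝ) := by exact_mod_cast hkp
          linarith
        nlinarith [mul_nonneg hx0 (sub_nonneg.2 hκ0), sub_pos.2 hs₀]
      calc (2:ℝ)^((k:ℝ)*s) * u p k
          ≤ C₀ * ((2:ℝ)^(((k:ℝ)-((p:ℝ)+1))*(s-s₀)) * ((2:ℝ)^(((p:ℝ)+1)*s) * NE (f (p+1)))) := H1
        _ ≤ C * (D * c p) := by
            refine mul_le_mul (hC ▸ le_max_left _ _) ?_ ?_ hCpos.le
            · exact mul_le_mul HE hNEγ
                (mul_nonneg (Real.rpow_nonneg two_pos.le _) (hNE.nonneg _)) hD0.le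
            · exact mul_nonneg (Real.rpow_nonneg two_pos.le _)
                (mul_nonneg (Real.rpow_nonneg two_pos.le _) (hNE.nonneg _))
        _ = C * c p * D := by ring
    · -- high frequencies: use the tame bound
      have hd : PhiAux.distN k p = k - p := by simp [PhiAux.distN, Nat.sub_eq_zero_of_le hkp.le]
      have hple : (p:ℝ) ≤ (k:ℝ) := by exact_mod_cast hkp.le
      have hcast : ((k - p : ℕ):ℝ) = (k:ℝ) - (p:ℝ) := Nat.cast_sub hkp.le
      rw [hd, hpow, hcast]
      set D : ℝ := (2:ℝ) ^ (-(κ * ((k:ℝ) - (p:ℝ)))) with hD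
      have hD0 : (0:ℝ) < D := Real.rpow_pos_of_pos two_pos _
      set t : ℝ := s₁ - s with ht
      have ht0 : (0:ℝ) < (2:ℝ)^t := Real.rpow_pos_of_pos two_pos _
      have hsub : u p k ≤ NF (Φ (smoothS (p+1) f) k) + NF (Φ (smoothS p f) k) := by
        rw [hu]
        simp only [Pi.sub_apply, sub_eq_add_neg]
        exact (hNF.add_le _ _).trans (by rw [hNF.neg])
      have hsplit : (2:ℝ)^((k:ℝ)*s) = (2:ℝ)^((k:ℝ)*(s-s₁)) * (2:ℝ)^((k:ℝ)*s₁) := by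
        rw [← Real.rpow_add two_pos]; congr 1; ring
      have hks1 : (0:ℝ) < (2:ℝ)^((k:ℝ)*(s-s₁)) := Real.rpow_pos_of_pos two_pos _
      have H1 : (2:ℝ)^((k:ℝ)*s) * u p k ≤
          (2:ℝ)^((k:ℝ)*(s-s₁)) * (C₁ * Sig (p+1)) + (2:ℝ)^((k:ℝ)*(s-s₁)) * (C₁ * Sig p) := by
        calc (2:ℝ)^((k:ℝ)*s) * u p k
            ≤ (2:ℝ)^((k:ℝ)*s) * (NF (Φ (smoothS (p+1) f) k) + NF (Φ (smoothS p f) k)) :=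
              mul_le_mul_of_nonneg_left hsub (Real.rpow_nonneg two_pos.le _)
          _ = (2:ℝ)^((k:ℝ)*(s-s₁)) * ((2:ℝ)^((k:ℝ)*s₁) * NF (Φ (smoothS (p+1) f) k))
              + (2:ℝ)^((k:ℝ)*(s-s₁)) * ((2:ℝ)^((k:ℝ)*s₁) * NF (Φ (smoothS p f) k)) := by
              rw [hsplit]; ring
          _ ≤ _ := add_le_add
              (mul_le_mul_of_nonneg_left (htameR (p+1) k) hks1.le)
              (mul_le_mul_of_nonneg_left (htameR p k) hks1.le)
      have HSig1 : (2:ℝ)^((k:ℝ)*(s-s₁)) * (C₁ * Sig (p+1))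
          = C₁ * ((2:ℝ)^((((p:ℝ)+1)-(k:ℝ))*t) * γ (p+1)) := by
        rw [hSigγ (p+1)]
        push_cast
        rw [show ((((p:ℝ)+1)-(k:ℝ))*t) = (k:ℝ)*(s-s₁) + (((p:ℝ)+1)*(s₁ - s)) by rw [ht]; ring,
          Real.rpow_add two_pos]
        ring
      have HSig2 : (2:ℝ)^((k:ℝ)*(s-s₁)) * (C₁ * Sig p)
          = C₁ * ((2:ℝ)^(((p:ℝ)-(k:ℝ))*t) * γ p) := by
        rw [hSigγ p]
        rw [show (((p:ℝ)-(k:ℝ))*t) = (k:ℝ)*(s-s₁) + ((p:ℝ)*(s₁ - s)) by rw [ht]; ring,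
          Real.rpow_add two_pos]
        ring
      have HE1 : (2:ℝ)^((((p:ℝ)+1)-(k:ℝ))*t) ≤ (2:ℝ)^t * D := by
        rw [hD, ← Real.rpow_add two_pos]
        refine Real.rpow_le_rpow_of_exponent_le one_le_two ?_
        rw [ht]
        nlinarith [mul_nonneg (sub_nonneg.2 hple) (sub_nonneg.2 hκ1)]
      have HE2 : (2:ℝ)^(((p:ℝ)-(k:ℝ))*t) ≤ D := by
        rw [hD]
        refine Real.rpow_le_rpow_of_exponent_le one_le_two ?_
        rw [ht]
        nlinarith [mul_nonneg (sub_nonneg.2 hple) (sub_nonneg.2 hκ1)]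
      have hCC : (1 + (2:ℝ)^t) * C₁ ≤ C := by rw [hC, ht]; exact le_max_right _ _
      calc (2:ℝ)^((k:ℝ)*s) * u p k
          ≤ C₁ * ((2:ℝ)^((((p:ℝ)+1)-(k:ℝ))*t) * γ (p+1))
            + C₁ * ((2:ℝ)^(((p:ℝ)-(k:ℝ))*t) * γ p) := by
            rw [← HSig1, ← HSig2]; exact H1
        _ ≤ C₁ * (((2:ℝ)^t * D) * γ (p+1)) + C₁ * (D * γ p) :=
            add_le_add
              (mul_le_mul_of_nonneg_left (mul_le_mul_of_nonneg_right HE1 (hγ0 (p+1))) hC₁.le)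
              (mul_le_mul_of_nonneg_left (mul_le_mul_of_nonneg_right HE2 (hγ0 p)) hC₁.le)
        _ = (C₁ * ((2:ℝ)^t * γ (p+1) + γ p)) * D := by ring
        _ ≤ (C * c p) * D := by
            refine mul_le_mul_of_nonneg_right ?_ hD0.le
            rw [hc p]
            nlinarith [mul_nonneg (mul_nonneg hC₁.le ht0.le) (hγ0 p),
              mul_nonneg hC₁.le (hγ0 (p+1)),
              mul_le_mul_of_nonneg_right hCC (add_nonneg (hγ0 p) (hγ0 (p+1)))]
        _ = C * c p * D := by ring
  -- ENNReal version of the key estimate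
  set lamE : ℝ≥0∞ := ENNReal.ofReal ((2:ℝ) ^ (-κ)) with hlamE
  set bb : ℕ → ℕ → ℝ≥0∞ :=
    fun p k => ENNReal.ofReal ((2:ℝ) ^ ((k:ℝ) * s) * u p k) with hbb
  have hbb_le : ∀ p k, bb p k ≤ ENNReal.ofReal C * (lamE ^ PhiAux.distN k p * ENNReal.ofReal (c p)) := by
    intro p k
    rw [hbb]
    refine le_trans (ENNReal.ofReal_le_ofReal (hkey p k)) (le_of_eq ?_)
    rw [ENNReal.ofReal_mul (mul_nonneg hCpos.le (hc0 p)), ENNReal.ofReal_mul hCpos.le,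
      ENNReal.ofReal_pow h2κ0.le]
    ring
  -- the tail Lipschitz control
  set tt : ℕ → ℝ≥0∞ := fun k => ENNReal.ofReal ((2:ℝ) ^ ((k:ℝ) * s₀) * NE (f k)) with htt
  have httfin : ∑' k, tt k ≠ ⊤ := by
    set ρ : ℝ≥0∞ := ENNReal.ofReal ((2:ℝ) ^ (s₀ - s)) with hρ
    have hρ1 : ρ < 1 := by
      rw [hρ, ← ENNReal.ofReal_one]
      exact ENNReal.ofReal_lt_ofReal_iff_of_nonneg (Real.rpow_nonneg two_pos.le _) |>.2
        (Real.rpow_lt_one_of_one_lt_of_neg one_lt_two (by linarith))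
    have hbound : ∀ k, tt k ≤ ENNReal.ofReal r * ρ ^ k := by
      intro k
      rw [htt, hρ, ← ENNReal.ofReal_pow (Real.rpow_nonneg two_pos.le _),
        ← ENNReal.ofReal_mul hr.le]
      refine ENNReal.ofReal_le_ofReal ?_
      have hsplit : (2:ℝ) ^ ((k:ℝ) * s₀) = ((2:ℝ) ^ (s₀ - s)) ^ k * (2:ℝ) ^ ((k:ℝ) * s) := by
        rw [← Real.rpow_natCast ((2:ℝ) ^ (s₀ - s)) k, ← Real.rpow_mul two_pos.le,
          ← Real.rpow_add two_pos]
        congr 1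
        ring
      rw [hsplit, mul_assoc, mul_comm r _]
      refine mul_le_mul_of_nonneg_left (hek k) ?_
      positivity
    refine ne_top_of_le_ne_top ?_ (ENNReal.tsum_le_tsum hbound)
    rw [ENNReal.tsum_mul_left, ENNReal.tsum_geometric]
    exact ENNReal.mul_ne_top ENNReal.ofReal_ne_top
      (ENNReal.inv_ne_top.2 (tsub_pos_of_lt hρ1).ne')
  set v : ℕ → ℝ≥0∞ := fun m => sigmaNorm NE s₀ 1 (f - smoothS m f) with hv
  have hveq : ∀ m, v m = ∑' j, tt (j + (m+1)) := by
    intro m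
    simp only [hv]
    rw [PhiAux.sigmaNorm_one]
    rw [show (∑' k : ℕ, ENNReal.ofReal ((2:ℝ) ^ ((k:ℝ) * s₀) * NE ((f - smoothS m f) k)))
        = ∑' k : ℕ, (if k ≤ m then 0 else tt k) from tsum_congr fun k => by
      rcases le_or_gt k m with h | h
      · simp [h, smoothS, Pi.sub_apply, hNE0]
      · simp [not_le.2 h, htt, smoothS, Pi.sub_apply]]
    rw [PhiAux.tsum_shift (m+1) (fun p hp => by simp [Nat.lt_succ_iff.1 hp])]
    refine tsum_congr fun j => ?_
    have : ¬ (j + (m+1) ≤ m) := by omega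
    simp [this]
  have hvlim : Tendsto v atTop (nhds 0) := by
    have h1 := (ENNReal.tendsto_sum_nat_add tt httfin).comp (tendsto_add_atTop_nat 1)
    refine h1.congr fun m => ?_
    simp only [Function.comp]
    exact (hveq m).symm
  have hlipfm : ∀ m k : ℕ, ENNReal.ofReal ((2:ℝ) ^ ((k:ℝ) * s₀) * NF ((Φ f - Φ (smoothS m f)) k))
      ≤ ENNReal.ofReal C₀ * v m := by
    intro m k
    have h := hlip f (smoothS m f) hfmem hfball (hmem_m m) (hball_m m)
    rw [PhiAux.sigmaNorm_top] at h
    exact (le_iSup (fun k : ℕ => ENNReal.ofReal ((2:ℝ) ^ ((k:ℝ) * s₀) *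
      NF ((Φ f - Φ (smoothS m f)) k))) k).trans h
  -- telescoping
  have htel : ∀ n m k : ℕ, NF ((Φ f - Φ (smoothS n f)) k) ≤
      (∑ i ∈ Finset.range m, u (n+i) k) + NF ((Φ f - Φ (smoothS (n+m) f)) k) := by
    intro n m k
    induction m with
    | zero => simp
    | succ m ih =>
      refine ih.trans ?_
      rw [Finset.sum_range_succ]
      have hx : (Φ f - Φ (smoothS (n+m) f)) k
          = ((Φ (smoothS (n+m+1) f) - Φ (smoothS (n+m) f)) k)
            + ((Φ f - Φ (smoothS (n+m+1) f)) k) := by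
        simp only [Pi.sub_apply]
        abel
      have h2 : NF ((Φ f - Φ (smoothS (n+m) f)) k) ≤
          u (n+m) k + NF ((Φ f - Φ (smoothS (n+(m+1)) f)) k) := by
        rw [hx, hu]
        have := hNF.add_le ((Φ (smoothS (n+m+1) f) - Φ (smoothS (n+m) f)) k)
          ((Φ f - Φ (smoothS (n+m+1) f)) k)
        simpa [← Nat.add_assoc] using this
      linarith
  -- pointwise bound by the tail series
  have hBk : ∀ n k : ℕ, ENNReal.ofReal ((2:ℝ) ^ ((k:ℝ) * s) * NF ((Φ f - Φ (smoothS n f)) k))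
      ≤ ∑' i, bb (n+i) k := by
    intro n k
    set K : ℝ≥0∞ := ENNReal.ofReal ((2:ℝ) ^ ((k:ℝ) * (s - s₀))) * ENNReal.ofReal C₀ with hK
    have hKtop : K ≠ ⊤ := ENNReal.mul_ne_top ENNReal.ofReal_ne_top ENNReal.ofReal_ne_top
    have hstep : ∀ m, ENNReal.ofReal ((2:ℝ) ^ ((k:ℝ) * s) * NF ((Φ f - Φ (smoothS n f)) k))
        ≤ (∑' i, bb (n+i) k) + K * v (n+m) := by
      intro m
      have h1 : (2:ℝ) ^ ((k:ℝ) * s) * NF ((Φ f - Φ (smoothS n f)) k)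
          ≤ (∑ i ∈ Finset.range m, (2:ℝ) ^ ((k:ℝ) * s) * u (n+i) k)
            + (2:ℝ) ^ ((k:ℝ) * s) * NF ((Φ f - Φ (smoothS (n+m) f)) k) := by
        rw [← Finset.mul_sum, ← mul_add]
        exact mul_le_mul_of_nonneg_left (htel n m k) (Real.rpow_nonneg two_pos.le _)
      refine (ENNReal.ofReal_le_ofReal h1).trans ?_
      rw [ENNReal.ofReal_add (Finset.sum_nonneg fun i _ =>
          mul_nonneg (Real.rpow_nonneg two_pos.le _) (hu0 _ _))
          (mul_nonneg (Real.rpow_nonneg two_pos.le _) (hNF.nonneg _))]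
      refine add_le_add ?_ ?_
      · rw [ENNReal.ofReal_sum_of_nonneg fun i _ =>
          mul_nonneg (Real.rpow_nonneg two_pos.le _) (hu0 _ _)]
        exact (ENNReal.sum_le_tsum _).trans (le_of_eq rfl)
      · have hsplit : (2:ℝ) ^ ((k:ℝ) * s) * NF ((Φ f - Φ (smoothS (n+m) f)) k)
            = (2:ℝ) ^ ((k:ℝ) * (s - s₀)) *
              ((2:ℝ) ^ ((k:ℝ) * s₀) * NF ((Φ f - Φ (smoothS (n+m) f)) k)) := by
          rw [← mul_assoc, ← Real.rpow_add two_pos]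
          congr 2
          ring
        rw [hsplit, ENNReal.ofReal_mul (Real.rpow_nonneg two_pos.le _), hK]
        calc ENNReal.ofReal ((2:ℝ) ^ ((k:ℝ) * (s - s₀))) *
              ENNReal.ofReal ((2:ℝ) ^ ((k:ℝ) * s₀) * NF ((Φ f - Φ (smoothS (n+m) f)) k))
            ≤ ENNReal.ofReal ((2:ℝ) ^ ((k:ℝ) * (s - s₀))) * (ENNReal.ofReal C₀ * v (n+m)) :=
              mul_le_mul_of_nonneg_left (hlipfm (n+m) k) zero_le
          _ = ENNReal.ofReal ((2:ℝ) ^ ((k:ℝ) * (s - s₀))) * ENNReal.ofReal C₀ * v (n+m) := by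
              rw [mul_assoc]
    have h2 : Tendsto (fun m => K * v (n+m)) atTop (nhds 0) := by
      have h3 : Tendsto (fun m => v (n+m)) atTop (nhds 0) := by
        refine hvlim.comp ?_
        exact tendsto_atTop_mono (fun m => Nat.le_add_left m n) tendsto_id
      have h4 := ENNReal.Tendsto.const_mul h3 (Or.inr hKtop)
      simpa using h4
    have hlimit : Tendsto (fun m => (∑' i, bb (n+i) k) + K * v (n+m)) atTop
        (nhds (∑' i, bb (n+i) k)) := by
      have := Tendsto.const_add (∑' i, bb (n+i) k) h2
      simpa using this
    exact ge_of_tendsto' hlimit hstep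
  -- finiteness of the ℓ^q norm of (c p)
  set lamE1 : ℝ≥0∞ := ENNReal.ofReal ((2:ℝ) ^ (-(s₁ - s))) with hlamE1
  have hpow2 : ∀ (a : ℝ) (d : ℕ), ((2:ℝ) ^ (-a)) ^ d = (2:ℝ) ^ (-(a * (d:ℝ))) := by
    intro a d
    rw [← Real.rpow_natCast ((2:ℝ) ^ (-a)) d, ← Real.rpow_mul two_pos.le]
    ring_nf
  have hofγ : ∀ p : ℕ, ENNReal.ofReal (γ p) ≤ ∑' k, lamE1 ^ PhiAux.distN p k * e k := by
    intro p
    have h1 : ENNReal.ofReal (γ p) = ∑ k ∈ Finset.range (p+1), lamE1 ^ (p - k) * e k := by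
      rw [hγ p, Finset.mul_sum, ENNReal.ofReal_sum_of_nonneg (fun k _ =>
        mul_nonneg (Real.rpow_nonneg two_pos.le _) (hterm_nonneg s₁ k (f k)))]
      refine Finset.sum_congr rfl fun k hk => ?_
      have hkp : k ≤ p := Nat.lt_succ_iff.1 (Finset.mem_range.1 hk)
      rw [hlamE1, ← ENNReal.ofReal_pow (Real.rpow_nonneg two_pos.le _), he]
      rw [← ENNReal.ofReal_mul (by positivity)]
      congr 1
      rw [hpow2, Nat.cast_sub hkp]
      rw [show (2:ℝ)^(-((p:ℝ)*(s₁-s))) * ((2:ℝ)^((k:ℝ)*s₁) * NE (f k))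
            = (2:ℝ)^(-((p:ℝ)*(s₁-s)) + (k:ℝ)*s₁) * NE (f k) by
          rw [Real.rpow_add two_pos]; ring,
        show (2:ℝ)^(-((s₁-s) * ((p:ℝ)-(k:ℝ)))) * ((2:ℝ)^((k:ℝ)*s) * NE (f k))
            = (2:ℝ)^(-((s₁-s)*((p:ℝ)-(k:ℝ))) + (k:ℝ)*s) * NE (f k) by
          rw [Real.rpow_add two_pos]; ring,
        show -((p:ℝ)*(s₁-s)) + (k:ℝ)*s₁ = -((s₁-s)*((p:ℝ)-(k:ℝ))) + (k:ℝ)*s by ring]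
    rw [h1]
    rw [Finset.sum_congr rfl (fun k hk => by
      have hkp : k ≤ p := Nat.lt_succ_iff.1 (Finset.mem_range.1 hk)
      rw [show PhiAux.distN p k = p - k by
        simp [PhiAux.distN, Nat.sub_eq_zero_of_le hkp]] :
        ∀ k ∈ Finset.range (p+1), lamE1 ^ (p - k) * e k = lamE1 ^ PhiAux.distN p k * e k)]
    exact ENNReal.sum_le_tsum _
  have hγfin : PhiAux.lq q (fun p => ENNReal.ofReal (γ p)) ≠ ⊤ := by
    have hlam1 : lamE1 < 1 := by
      rw [hlamE1, ← ENNReal.ofReal_one]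
      exact (ENNReal.ofReal_lt_ofReal_iff_of_nonneg (Real.rpow_nonneg two_pos.le _)).2
        (Real.rpow_lt_one_of_one_lt_of_neg one_lt_two (by linarith))
    have h1 : PhiAux.lq q (fun p => ENNReal.ofReal (γ p)) ≤
        2 * (1 - lamE1)⁻¹ * PhiAux.lq q e :=
      le_trans (PhiAux.lq_mono hq hofγ) (PhiAux.lq_conv_le hq lamE1 e)
    have hfin : 2 * (1 - lamE1)⁻¹ * PhiAux.lq q e ≠ ⊤ := by
      refine ENNReal.mul_ne_top (ENNReal.mul_ne_top ENNReal.ofNat_ne_top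
        (ENNReal.inv_ne_top.2 (tsub_pos_of_lt hlam1).ne')) ?_
      exact ne_top_of_le_ne_top ENNReal.ofReal_ne_top (hfnorm ▸ hfball.le)
    exact ne_top_of_le_ne_top hfin h1
  have hcfin : (∑' p, ENNReal.ofReal (c p) ^ q) ≠ ⊤ := by
    have h1 : (fun p => ENNReal.ofReal (c p))
        = fun p => ENNReal.ofReal (γ p) + ENNReal.ofReal (γ (p+1)) :=
      funext fun p => by rw [hc p, ENNReal.ofReal_add (hγ0 p) (hγ0 (p+1))]
    have h3 : PhiAux.lq q (fun p => ENNReal.ofReal (γ (p+1)))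
        ≤ PhiAux.lq q (fun p => ENNReal.ofReal (γ p)) := by
      unfold PhiAux.lq
      refine ENNReal.rpow_le_rpow ?_ (by positivity)
      exact ENNReal.tsum_comp_le_tsum_of_injective (add_left_injective 1)
        (fun p => ENNReal.ofReal (γ p) ^ q)
    have h2 : PhiAux.lq q (fun p => ENNReal.ofReal (c p)) ≠ ⊤ := by
      rw [h1]
      refine ne_top_of_le_ne_top ?_ (PhiAux.lq_add_le hq _ _)
      exact ENNReal.add_ne_top.2 ⟨hγfin, ne_top_of_le_ne_top hγfin h3⟩
    intro hcon
    apply h2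
    unfold PhiAux.lq
    rw [hcon]
    exact ENNReal.top_rpow_of_pos (by positivity)
  -- the main bound, for every n
  have hmain : ∀ n : ℕ, sigmaNorm NF s (ENNReal.ofReal q) (Φ f - Φ (smoothS n f))
      ≤ ENNReal.ofReal (A * C) * (∑' p : ℕ, ENNReal.ofReal (c (n + p)) ^ q) ^ (1/q) := by
    intro n
    set dseq : ℕ → ℝ≥0∞ := fun p => if n ≤ p then ENNReal.ofReal (c p) else 0 with hdseq
    have hgk : ∀ k : ℕ, (∑' i, bb (n+i) k) ≤
        ENNReal.ofReal C * ∑' p, lamE ^ PhiAux.distN k p * dseq p := by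
      intro k
      calc (∑' i, bb (n+i) k)
          ≤ ∑' i, ENNReal.ofReal C * (lamE ^ PhiAux.distN k (n+i) * ENNReal.ofReal (c (n+i))) :=
            ENNReal.tsum_le_tsum fun i => hbb_le (n+i) k
        _ = ENNReal.ofReal C * ∑' i, lamE ^ PhiAux.distN k (n+i) * ENNReal.ofReal (c (n+i)) :=
            ENNReal.tsum_mul_left
        _ = ENNReal.ofReal C * ∑' p, lamE ^ PhiAux.distN k p * dseq p := by
            congr 1
            rw [PhiAux.tsum_shift (v := fun p => lamE ^ PhiAux.distN k p * dseq p) n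
              (fun p hp => by simp [hdseq, not_le.2 hp])]
            refine tsum_congr fun i => ?_
            rw [hdseq]
            simp only []
            rw [if_pos (Nat.le_add_left n i), add_comm i n]
    have hnorm_eq : sigmaNorm NF s (ENNReal.ofReal q) (Φ f - Φ (smoothS n f)) =
        PhiAux.lq q (fun k =>
          ENNReal.ofReal ((2:ℝ)^((k:ℝ)*s) * NF ((Φ f - Φ (smoothS n f)) k))) :=
      PhiAux.sigmaNorm_ofReal NF s hq0.le _
    have hdseq_norm : PhiAux.lq q dseq = (∑' p, ENNReal.ofReal (c (n + p)) ^ q) ^ (1/q) := by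
      unfold PhiAux.lq
      congr 1
      rw [PhiAux.tsum_shift (v := fun p => dseq p ^ q) n (fun p hp => by
        simp [hdseq, not_le.2 hp, ENNReal.zero_rpow_of_pos hq0])]
      refine tsum_congr fun i => ?_
      rw [hdseq]
      simp only []
      rw [if_pos (Nat.le_add_left n i), add_comm i n]
    have hAC : ENNReal.ofReal (A * C) = 2 * (1 - lamE)⁻¹ * ENNReal.ofReal C := by
      rw [ENNReal.ofReal_mul hApos.le]
      congr 1
      rw [hA, hlamE, ENNReal.ofReal_div_of_pos (by linarith),
        ENNReal.ofReal_sub _ h2κ0.le, ENNReal.ofReal_one, ENNReal.ofReal_ofNat,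
        div_eq_mul_inv]
    rw [hnorm_eq, hAC, ← hdseq_norm]
    calc PhiAux.lq q (fun k =>
            ENNReal.ofReal ((2:ℝ)^((k:ℝ)*s) * NF ((Φ f - Φ (smoothS n f)) k)))
        ≤ PhiAux.lq q (fun k => ENNReal.ofReal C * ∑' p, lamE ^ PhiAux.distN k p * dseq p) :=
          PhiAux.lq_mono hq (fun k => (hBk n k).trans (hgk k))
      _ = ENNReal.ofReal C * PhiAux.lq q (fun k => ∑' p, lamE ^ PhiAux.distN k p * dseq p) :=
          PhiAux.lq_const_mul hq0 _ _
      _ ≤ ENNReal.ofReal C * (2 * (1 - lamE)⁻¹ * PhiAux.lq q dseq) :=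
          mul_le_mul_of_nonneg_left (PhiAux.lq_conv_le hq lamE dseq) zero_le
      _ = 2 * (1 - lamE)⁻¹ * ENNReal.ofReal C * PhiAux.lq q dseq := by ring
  have htail_fin : ∀ n : ℕ, (∑' p : ℕ, ENNReal.ofReal (c (n + p)) ^ q) ≠ ⊤ := fun n =>
    ne_top_of_le_ne_top hcfin (ENNReal.tsum_comp_le_tsum_of_injective
      (add_right_injective n) (fun p => ENNReal.ofReal (c p) ^ q))
  refine ⟨fun n => ⟨?_, hmain n⟩, ?_⟩
  · refine (PhiAux.memSigma_ofReal NF s q _).2 ?_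
    refine lt_of_le_of_lt (hmain n) ?_
    exact ENNReal.mul_lt_top ENNReal.ofReal_lt_top
      (ENNReal.rpow_lt_top_of_nonneg (one_div_nonneg.2 hq0.le) (htail_fin n))
  · have htail : Tendsto (fun n => (∑' p : ℕ, ENNReal.ofReal (c (n + p)) ^ q))
        atTop (nhds 0) := by
      have h1 := ENNReal.tendsto_sum_nat_add (fun p => ENNReal.ofReal (c p) ^ q) hcfin
      refine h1.congr fun n => tsum_congr fun p => by rw [add_comm p n]
    have h2 : Tendsto (fun x : ℝ≥0∞ => ENNReal.ofReal (A*C) * x ^ (1/q)) (nhds 0) (nhds 0) :=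
      ENNReal.tendsto_const_mul_rpow_nhds_zero_of_pos ENNReal.ofReal_ne_top (one_div_pos.2 hq0)
    have h3 := h2.comp htail
    exact tendsto_of_tendsto_of_tendsto_of_le_of_le tendsto_const_nhds h3
      (fun n => zero_le) (fun n => hmain n)
end

section
/- Let E and F be pseudo-normed real vector spaces, let s_0 < s < s_1 be real numbers, q ∈ [1,∞], r > 0, and let Φ : B_{s,q}(0,r) → Σ^{s_0}_∞(F) satisfy the weak Lipschitz and tame estimates. Then for every f ∈ B_{s,q}(0,r), Φ(f) belongs to Σ^s_q(F), the sequences Φ(S_n f) are well-defined for all n ∈ ℕ, and Φ(S_n f) converges to Φ(f) in Σ^s_q(F), i.e. ‖Φ(f) − Φ(S_n f)‖_{Σ^s_q(F)} → 0 as n → ∞. -/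
open Filter
open scoped ENNReal NNReal

/-- rpow commutes with iSup for positive exponents. -/
lemma aux_rpow_iSup {ι : Sort*} (a : ι → ℝ≥0∞) {y : ℝ} (hy : 0 < y) :
    (⨆ i, a i) ^ y = ⨆ i, a i ^ y := by
  have hcol : ∀ x : ℝ≥0∞, (x ^ y) ^ (1/y) = x := fun x => by
    rw [← ENNReal.rpow_mul, mul_one_div_cancel hy.ne', ENNReal.rpow_one]
  have hcol' : ∀ x : ℝ≥0∞, (x ^ (1/y)) ^ y = x := fun x => by
    rw [← ENNReal.rpow_mul, one_div_mul_cancel hy.ne', ENNReal.rpow_one]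
  apply le_antisymm
  · have h1 : (⨆ i, a i) ≤ (⨆ i, a i ^ y) ^ (1/y) := by
      apply iSup_le; intro i
      calc a i = (a i ^ y) ^ (1/y) := (hcol (a i)).symm
      _ ≤ (⨆ j, a j ^ y) ^ (1/y) :=
          ENNReal.rpow_le_rpow (le_iSup (fun j => a j ^ y) i) (by positivity)
    calc (⨆ i, a i) ^ y ≤ ((⨆ i, a i ^ y) ^ (1/y)) ^ y := ENNReal.rpow_le_rpow h1 hy.le
    _ = ⨆ i, a i ^ y := hcol' _
  · exact iSup_le fun i => ENNReal.rpow_le_rpow (le_iSup a i) hy.le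

lemma aux_rpow_collapse {y : ℝ} (hy : y ≠ 0) (x : ℝ≥0∞) : (x ^ y) ^ (1/y) = x := by
  rw [← ENNReal.rpow_mul, mul_one_div_cancel hy, ENNReal.rpow_one]

lemma aux_rpow_collapse' {y : ℝ} (hy : y ≠ 0) (x : ℝ≥0∞) : (x ^ (1/y)) ^ y = x := by
  rw [← ENNReal.rpow_mul, one_div_mul_cancel hy, ENNReal.rpow_one]

/-- Monotone convergence for tsum over ℕ. -/
lemma aux_tsum_iSup {g : ℕ → ℕ → ℝ≥0∞} (hg : Monotone g) :
    ∑' k, ⨆ n, g n k = ⨆ n, ∑' k, g n k := by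
  simp_rw [← MeasureTheory.lintegral_count]
  exact MeasureTheory.lintegral_iSup (fun n => measurable_from_top) hg

/-- Binary Minkowski inequality for tsum in ℝ≥0∞. -/
lemma aux_Lp_add_tsum {p : ℝ} (hp : 1 ≤ p) (f g : ℕ → ℝ≥0∞) :
    (∑' k, (f k + g k) ^ p) ^ (1/p) ≤ (∑' k, f k ^ p) ^ (1/p) + (∑' k, g k ^ p) ^ (1/p) := by
  have hp0 : (0:ℝ) < p := one_pos.trans_le hp
  have h1p : (0:ℝ) < 1/p := by positivity
  rw [ENNReal.tsum_eq_iSup_nat (f := fun k => (f k + g k) ^ p), aux_rpow_iSup _ h1p]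
  apply iSup_le; intro N
  calc (∑ k ∈ Finset.range N, (f k + g k) ^ p) ^ (1/p)
      ≤ (∑ k ∈ Finset.range N, f k ^ p) ^ (1/p) + (∑ k ∈ Finset.range N, g k ^ p) ^ (1/p) :=
        ENNReal.Lp_add_le _ _ _ hp
    _ ≤ _ := add_le_add
        (ENNReal.rpow_le_rpow (ENNReal.sum_le_tsum _) h1p.le)
        (ENNReal.rpow_le_rpow (ENNReal.sum_le_tsum _) h1p.le)

/-- Countable Minkowski inequality for tsum in ℝ≥0∞. -/
lemma aux_minkowski_tsum {p : ℝ} (hp : 1 ≤ p) (F : ℕ → ℕ → ℝ≥0∞) :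
    (∑' k, (∑' n, F n k) ^ p) ^ (1/p) ≤ ∑' n, (∑' k, F n k ^ p) ^ (1/p) := by
  have hp0 : (0:ℝ) < p := one_pos.trans_le hp
  have h1p : (0:ℝ) < 1/p := by positivity
  have hmono : Monotone (fun N => fun k => (∑ n ∈ Finset.range N, F n k) ^ p) := by
    intro M N hMN
    intro k
    exact ENNReal.rpow_le_rpow
      (Finset.sum_le_sum_of_subset (Finset.range_subset_range.2 hMN)) hp0.le
  have hfin : ∀ N, (∑' k, (∑ n ∈ Finset.range N, F n k) ^ p) ^ (1/p)
      ≤ ∑ n ∈ Finset.range N, (∑' k, F n k ^ p) ^ (1/p) := by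
    intro N
    induction N with
    | zero => simp [ENNReal.zero_rpow_of_pos hp0, ENNReal.zero_rpow_of_pos h1p, hp0]
    | succ N ih =>
      simp only [Finset.sum_range_succ]
      exact le_trans (aux_Lp_add_tsum hp _ _) (add_le_add ih le_rfl)
  calc (∑' k, (∑' n, F n k) ^ p) ^ (1/p)
      = (∑' k, ⨆ N, (∑ n ∈ Finset.range N, F n k) ^ p) ^ (1/p) := by
        congr 1
        apply tsum_congr; intro k
        rw [ENNReal.tsum_eq_iSup_nat, aux_rpow_iSup _ hp0]
    _ = (⨆ N, ∑' k, (∑ n ∈ Finset.range N, F n k) ^ p) ^ (1/p) := by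
        rw [aux_tsum_iSup hmono]
    _ = ⨆ N, (∑' k, (∑ n ∈ Finset.range N, F n k) ^ p) ^ (1/p) := aux_rpow_iSup _ h1p
    _ ≤ ∑' n, (∑' k, F n k ^ p) ^ (1/p) :=
        iSup_le fun N => (hfin N).trans (ENNReal.sum_le_tsum _)

/-- Reindexing a shifted sum. -/
lemma aux_tsum_shift_ite (h : ℕ → ℝ≥0∞) (j : ℕ) :
    ∑' k, (if j ≤ k then h (k - j) else 0) = ∑' m, h m := by
  have hinj : Function.Injective (fun m : ℕ => m + j) := add_left_injective j
  have hsupp : Function.support (fun k : ℕ => if j ≤ k then h (k - j) else 0)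
      ⊆ Set.range (fun m : ℕ => m + j) := by
    intro k hk
    simp only [Function.mem_support] at hk
    by_cases hjk : j ≤ k
    · exact ⟨k - j, by show k - j + j = k; omega⟩
    · simp [hjk] at hk
  rw [← Function.Injective.tsum_eq hinj hsupp]
  apply tsum_congr; intro m
  simp [Nat.le_add_left, Nat.add_sub_cancel]

lemma aux_kernel_split (ρ : ℝ≥0∞) (k t : ℕ) (x : ℝ≥0∞) :
    ρ ^ (Nat.dist k t) * x
      ≤ (if t ≤ k then ρ ^ (k - t) * x else 0) + (if k ≤ t then ρ ^ (t - k) * x else 0) := by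
  rcases le_total t k with h | h
  · rw [Nat.dist_eq_sub_of_le_right h, if_pos h]
    exact le_self_add
  · rw [Nat.dist_eq_sub_of_le h, if_pos h]
    exact le_add_self

lemma aux_conv_le (ρ : ℝ≥0∞) (A : ℕ → ℝ≥0∞) (k : ℕ) :
    ∑' t, ρ ^ (Nat.dist k t) * A t ≤
      (∑' j, ρ ^ j * (if j ≤ k then A (k - j) else 0)) + ∑' j, ρ ^ j * A (k + j) := by
  calc ∑' t, ρ ^ (Nat.dist k t) * A t
      ≤ ∑' t, ((if t ≤ k then ρ ^ (k - t) * A t else 0)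
          + (if k ≤ t then ρ ^ (t - k) * A t else 0)) :=
        ENNReal.tsum_le_tsum (fun t => aux_kernel_split ρ k t (A t))
    _ = (∑' t, if t ≤ k then ρ ^ (k - t) * A t else 0)
          + ∑' t, (if k ≤ t then ρ ^ (t - k) * A t else 0) := ENNReal.tsum_add
    _ ≤ _ := by
        apply add_le_add
        · have h1 : (∑' t, if t ≤ k then ρ ^ (k - t) * A t else 0)
              = ∑ t ∈ Finset.range (k+1), (if t ≤ k then ρ ^ (k - t) * A t else 0) := by
            apply tsum_eq_sum
            intro b hb
            rw [if_neg]
            intro hbk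
            exact hb (Finset.mem_range.2 (Nat.lt_succ_of_le hbk))
          have h2 : (∑' j, ρ ^ j * (if j ≤ k then A (k - j) else 0))
              = ∑ j ∈ Finset.range (k+1), ρ ^ j * (if j ≤ k then A (k - j) else 0) := by
            apply tsum_eq_sum
            intro b hb
            rw [if_neg, mul_zero]
            intro hbk
            exact hb (Finset.mem_range.2 (Nat.lt_succ_of_le hbk))
          rw [h1, h2, ← Finset.sum_range_reflect]
          apply le_of_eq
          apply Finset.sum_congr rfl
          intro j hj
          have hj' : j ≤ k := Nat.lt_succ_iff.mp (Finset.mem_range.mp hj)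
          have e1 : k + 1 - 1 - j = k - j := by omega
          have e2 : k - j ≤ k := Nat.sub_le k j
          have e3 : k - (k - j) = j := by omega
          rw [e1, if_pos e2, if_pos hj', e3]
        · rw [← aux_tsum_shift_ite (fun d => ρ ^ d * A (k + d)) k]
          apply le_of_eq
          apply tsum_congr; intro t
          by_cases h : k ≤ t
          · rw [if_pos h, if_pos h]
            congr 2
            omega
          · rw [if_neg h, if_neg h]

lemma aux_kernel_tsum_le (ρ : ℝ≥0∞) (k : ℕ) :
    ∑' t, ρ ^ (Nat.dist k t) ≤ 2 * (1 - ρ)⁻¹ := by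
  have h := aux_conv_le ρ (fun _ => 1) k
  simp only [mul_one] at h
  refine h.trans ?_
  rw [two_mul]
  apply add_le_add
  · calc ∑' (j:ℕ), ρ ^ j * (if j ≤ k then (1:ℝ≥0∞) else 0)
        ≤ ∑' (j:ℕ), ρ ^ j :=
          ENNReal.tsum_le_tsum (fun j => by by_cases h' : j ≤ k <;> simp [h'])
    _ = (1 - ρ)⁻¹ := ENNReal.tsum_geometric ρ
  · exact le_of_eq (ENNReal.tsum_geometric ρ)


/-- `ℓ^p` norm of a constant multiple. -/
lemma aux_Np_const_mul {p : ℝ} (hp0 : 0 < p) (c : ℝ≥0∞) (u : ℕ → ℝ≥0∞) :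
    (∑' k, (c * u k) ^ p) ^ (1/p) = c * (∑' k, u k ^ p) ^ (1/p) := by
  have h1 : ∀ k, (c * u k) ^ p = c ^ p * u k ^ p := fun k =>
    ENNReal.mul_rpow_of_nonneg _ _ hp0.le
  simp_rw [h1]
  rw [ENNReal.tsum_mul_left, ENNReal.mul_rpow_of_nonneg _ _ (by positivity : (0:ℝ) ≤ 1/p),
    aux_rpow_collapse hp0.ne' c]

/-- `ℓ^p` norm of a geometric-pow weight pulled out. -/
lemma aux_Np_pow_mul {p : ℝ} (hp0 : 0 < p) (ρ : ℝ≥0∞) (j : ℕ) (u : ℕ → ℝ≥0∞) :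
    (∑' k, (ρ ^ j * u k) ^ p) ^ (1/p) = ρ ^ j * (∑' k, u k ^ p) ^ (1/p) :=
  aux_Np_const_mul hp0 (ρ ^ j) u

/-- Young-type convolution inequality in `ℓ^p(ℝ≥0∞)`. -/
lemma aux_young_sum {p : ℝ} (hp : 1 ≤ p) (ρ : ℝ≥0∞) (A : ℕ → ℝ≥0∞) :
    (∑' k, (∑' t, ρ ^ (Nat.dist k t) * A t) ^ p) ^ (1/p) ≤
      (2 * (1 - ρ)⁻¹) * (∑' t, A t ^ p) ^ (1/p) := by
  have hp0 : (0:ℝ) < p := one_pos.trans_le hp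
  have h1p : (0:ℝ) < 1/p := by positivity
  set NpA := (∑' t, A t ^ p) ^ (1/p) with hNpA
  have hL : (∑' k, (∑' j, ρ ^ j * (if j ≤ k then A (k - j) else 0)) ^ p) ^ (1/p)
      ≤ (1 - ρ)⁻¹ * NpA := by
    refine le_trans
      (aux_minkowski_tsum hp (fun j k => ρ ^ j * (if j ≤ k then A (k - j) else 0))) ?_
    have heq : ∀ j : ℕ, (∑' k, (ρ ^ j * (if j ≤ k then A (k - j) else 0)) ^ p) ^ (1/p)
        = ρ ^ j * NpA := by
      intro j
      rw [aux_Np_pow_mul hp0]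
      congr 1
      rw [hNpA]
      congr 1
      rw [← aux_tsum_shift_ite (fun m => A m ^ p) j]
      apply tsum_congr; intro k
      by_cases h : j ≤ k
      · rw [if_pos h, if_pos h]
      · rw [if_neg h, if_neg h, ENNReal.zero_rpow_of_pos hp0]
    apply le_of_eq
    calc ∑' j : ℕ, (∑' k, (ρ ^ j * (if j ≤ k then A (k - j) else 0)) ^ p) ^ (1/p)
        = ∑' j : ℕ, ρ ^ j * NpA := tsum_congr heq
      _ = (1 - ρ)⁻¹ * NpA := by rw [ENNReal.tsum_mul_right, ENNReal.tsum_geometric]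
  have hR : (∑' k, (∑' j, ρ ^ j * A (k + j)) ^ p) ^ (1/p) ≤ (1 - ρ)⁻¹ * NpA := by
    have hsw : ∀ k, (∑' j, ρ ^ j * A (k + j)) = ∑' j, (fun j k => ρ ^ j * A (k + j)) j k :=
      fun k => rfl
    refine le_trans (aux_minkowski_tsum hp (fun j k => ρ ^ j * A (k + j))) ?_
    have hle : ∀ j : ℕ, (∑' k, (ρ ^ j * A (k + j)) ^ p) ^ (1/p) ≤ ρ ^ j * NpA := by
      intro j
      rw [aux_Np_pow_mul hp0]
      apply mul_le_mul_right
      apply ENNReal.rpow_le_rpow _ h1p.le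
      have : ∀ k : ℕ, A (k + j) ^ p = (fun m => A m ^ p) ((fun k : ℕ => k + j) k) := fun k => rfl
      exact ENNReal.tsum_comp_le_tsum_of_injective (add_left_injective j) (fun m => A m ^ p)
    calc ∑' j : ℕ, (∑' k, (ρ ^ j * A (k + j)) ^ p) ^ (1/p)
        ≤ ∑' j : ℕ, ρ ^ j * NpA := ENNReal.tsum_le_tsum hle
      _ = (1 - ρ)⁻¹ * NpA := by rw [ENNReal.tsum_mul_right, ENNReal.tsum_geometric]
  calc (∑' k, (∑' t, ρ ^ (Nat.dist k t) * A t) ^ p) ^ (1/p)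
      ≤ (∑' k, ((∑' j, ρ ^ j * (if j ≤ k then A (k - j) else 0))
          + ∑' j, ρ ^ j * A (k + j)) ^ p) ^ (1/p) := by
        apply ENNReal.rpow_le_rpow _ h1p.le
        apply ENNReal.tsum_le_tsum
        intro k
        exact ENNReal.rpow_le_rpow (aux_conv_le ρ A k) hp0.le
    _ ≤ (∑' k, (∑' j, ρ ^ j * (if j ≤ k then A (k - j) else 0)) ^ p) ^ (1/p)
          + (∑' k, (∑' j, ρ ^ j * A (k + j)) ^ p) ^ (1/p) := aux_Lp_add_tsum hp _ _
    _ ≤ (1 - ρ)⁻¹ * NpA + (1 - ρ)⁻¹ * NpA := add_le_add hL hR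
    _ = (2 * (1 - ρ)⁻¹) * NpA := by rw [← two_mul, ← mul_assoc]

/-- Tail of a finite sum tends to zero. -/
lemma aux_tail_tendsto {g : ℕ → ℝ≥0∞} (hg : ∑' j, g j ≠ ⊤) :
    Tendsto (fun n => ∑' j, if n ≤ j then g j else 0) atTop (nhds 0) := by
  set S := ∑' j, g j with hS
  have hsplit : ∀ n, (∑ j ∈ Finset.range n, g j) + (∑' j, if n ≤ j then g j else 0) = S := by
    intro n
    have h1 : ∀ j, g j = (if j < n then g j else 0) + (if n ≤ j then g j else 0) := by
      intro j
      by_cases h : j < n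
      · rw [if_pos h, if_neg (by omega), add_zero]
      · rw [if_neg h, if_pos (by omega), zero_add]
    have h2 : S = (∑' j, if j < n then g j else 0) + (∑' j, if n ≤ j then g j else 0) := by
      rw [hS]
      calc ∑' j, g j = ∑' j, ((if j < n then g j else 0) + (if n ≤ j then g j else 0)) :=
        tsum_congr h1
      _ = _ := ENNReal.tsum_add
    have h3 : (∑' j, if j < n then g j else 0) = ∑ j ∈ Finset.range n, g j := by
      rw [tsum_eq_sum (s := Finset.range n)]
      · apply Finset.sum_congr rfl
        intro j hj
        rw [if_pos (Finset.mem_range.mp hj)]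
      · intro b hb
        rw [if_neg (fun h => hb (Finset.mem_range.2 h))]
    rw [h2, h3]
  have hP : Tendsto (fun n => ∑ j ∈ Finset.range n, g j) atTop (nhds S) :=
    ENNReal.tendsto_nat_tsum g
  have htail : ∀ n, (∑' j, if n ≤ j then g j else 0) = S - ∑ j ∈ Finset.range n, g j := by
    intro n
    have hPn : (∑ j ∈ Finset.range n, g j) ≠ ⊤ :=
      ne_top_of_le_ne_top hg (ENNReal.sum_le_tsum _)
    rw [← hsplit n, ENNReal.add_sub_cancel_left hPn]
  have : Tendsto (fun n => S - ∑ j ∈ Finset.range n, g j) atTop (nhds (S - S)) :=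
    ENNReal.Tendsto.sub tendsto_const_nhds hP (Or.inl hg)
  rw [tsub_self] at this
  exact this.congr (fun n => (htail n).symm)

lemma aux_rpow_tendsto_zero {f : ℕ → ℝ≥0∞} (h : Tendsto f atTop (nhds 0)) {y : ℝ} (hy : 0 < y) :
    Tendsto (fun n => f n ^ y) atTop (nhds 0) := by
  rw [ENNReal.tendsto_atTop_zero] at h ⊢
  intro ε hε
  rcases eq_or_ne ε ⊤ with rfl | hεt
  · exact ⟨0, fun n _ => le_top⟩
  obtain ⟨N, hN⟩ := h (ε ^ (1/y)) (ENNReal.rpow_pos hε hεt)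
  refine ⟨N, fun n hn => ?_⟩
  calc f n ^ y ≤ (ε ^ (1/y)) ^ y := ENNReal.rpow_le_rpow (hN n hn) hy.le
    _ = ε := aux_rpow_collapse' hy.ne' ε

/-- Convolution with a geometric kernel of a null sequence is null. -/
lemma aux_conv_null {ρ : ℝ≥0∞} (hρ : ρ < 1) {Γ : ℕ → ℝ≥0∞} (hfin : ∀ t, Γ t ≠ ⊤)
    (hΓ : Tendsto Γ atTop (nhds 0)) :
    Tendsto (fun k => ∑' t, ρ ^ (Nat.dist k t) * Γ t) atTop (nhds 0) := by
  have hc_ne_top : (2 * (1 - ρ)⁻¹ : ℝ≥0∞) ≠ ⊤ := by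
    apply ENNReal.mul_ne_top (by simp)
    rw [ENNReal.inv_ne_top]
    exact (tsub_pos_of_lt hρ).ne'
  rw [ENNReal.tendsto_atTop_zero] at hΓ ⊢
  intro ε hε
  set c := (2 * (1 - ρ)⁻¹ : ℝ≥0∞) with hc
  have hδpos : 0 < ε / 2 / c := by
    apply ENNReal.div_pos
    · exact (ENNReal.div_pos hε.ne' (by simp)).ne'
    · exact hc_ne_top
  obtain ⟨N, hN⟩ := hΓ (ε / 2 / c) hδpos
  -- the head part tends to zero in k
  have hhead : Tendsto (fun k => (ρ ^ (k + 1 - N)) * ∑ t ∈ Finset.range N, Γ t)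
      atTop (nhds 0) := by
    have hBS : (∑ t ∈ Finset.range N, Γ t) ≠ ⊤ :=
      (ENNReal.sum_lt_top.mpr (fun t _ => (hfin t).lt_top)).ne
    have h1 : Tendsto (fun m : ℕ => ρ ^ m * ∑ t ∈ Finset.range N, Γ t) atTop (nhds 0) := by
      have := ENNReal.Tendsto.mul_const
        (ENNReal.tendsto_pow_atTop_nhds_zero_of_lt_one hρ)
        (Or.inr hBS)
      rwa [zero_mul] at this
    have h2 : Tendsto (fun k : ℕ => k + 1 - N) atTop atTop := by
      apply tendsto_atTop_atTop.2
      intro b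
      exact ⟨b + N, fun a ha => by omega⟩
    exact h1.comp h2
  rw [ENNReal.tendsto_atTop_zero] at hhead
  obtain ⟨K, hK⟩ := hhead (ε / 2) (ENNReal.div_pos hε.ne' (by simp))
  refine ⟨max N K, fun k hk => ?_⟩
  have hkN : N ≤ k := le_trans (le_max_left _ _) hk
  have hkK : K ≤ k := le_trans (le_max_right _ _) hk
  -- split the sum
  have hsplit : ∑' t, ρ ^ (Nat.dist k t) * Γ t
      ≤ (∑ t ∈ Finset.range N, ρ ^ (Nat.dist k t) * Γ t)
        + ∑' t, (if N ≤ t then ρ ^ (Nat.dist k t) * Γ t else 0) := by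
    calc ∑' t, ρ ^ (Nat.dist k t) * Γ t
        = ∑' t, ((if t < N then ρ ^ (Nat.dist k t) * Γ t else 0)
            + (if N ≤ t then ρ ^ (Nat.dist k t) * Γ t else 0)) := by
          apply tsum_congr; intro t
          by_cases h : t < N
          · rw [if_pos h, if_neg (by omega), add_zero]
          · rw [if_neg h, if_pos (by omega), zero_add]
      _ = (∑' t, if t < N then ρ ^ (Nat.dist k t) * Γ t else 0)
            + ∑' t, (if N ≤ t then ρ ^ (Nat.dist k t) * Γ t else 0) := ENNReal.tsum_add
      _ ≤ _ := by
          apply add_le_add_left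
          apply le_of_eq
          rw [tsum_eq_sum (s := Finset.range N)]
          · apply Finset.sum_congr rfl
            intro t ht
            rw [if_pos (Finset.mem_range.mp ht)]
          · intro b hb
            rw [if_neg (fun h => hb (Finset.mem_range.2 h))]
  have hhead_le : (∑ t ∈ Finset.range N, ρ ^ (Nat.dist k t) * Γ t)
      ≤ (ρ ^ (k + 1 - N)) * ∑ t ∈ Finset.range N, Γ t := by
    rw [Finset.mul_sum]
    apply Finset.sum_le_sum
    intro t ht
    apply mul_le_mul_left
    have htN : t < N := Finset.mem_range.mp ht
    have hdist : Nat.dist k t = k - t := Nat.dist_eq_sub_of_le_right (by omega)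
    rw [hdist]
    exact pow_le_pow_right_of_le_one' hρ.le (by omega)
  have htail_le : (∑' t, if N ≤ t then ρ ^ (Nat.dist k t) * Γ t else 0) ≤ ε / 2 := by
    calc (∑' t, if N ≤ t then ρ ^ (Nat.dist k t) * Γ t else 0)
        ≤ ∑' t, ρ ^ (Nat.dist k t) * (ε / 2 / c) := by
          apply ENNReal.tsum_le_tsum
          intro t
          by_cases h : N ≤ t
          · rw [if_pos h]
            exact mul_le_mul_right (hN t h) _
          · rw [if_neg h]
            exact zero_le
      _ = (∑' t, ρ ^ (Nat.dist k t)) * (ε / 2 / c) := ENNReal.tsum_mul_right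
      _ ≤ c * (ε / 2 / c) := mul_le_mul_left (aux_kernel_tsum_le ρ k) _
      _ = ε / 2 := by
          have hc_ne_zero : c ≠ 0 := by
            rw [hc, mul_ne_zero_iff]
            refine ⟨by norm_num, ?_⟩
            rw [ENNReal.inv_ne_zero]
            exact ne_top_of_le_ne_top ENNReal.one_ne_top tsub_le_self
          rw [mul_comm, ENNReal.div_mul_cancel hc_ne_zero hc_ne_top]
  calc ∑' t, ρ ^ (Nat.dist k t) * Γ t
      ≤ (∑ t ∈ Finset.range N, ρ ^ (Nat.dist k t) * Γ t)
        + ∑' t, (if N ≤ t then ρ ^ (Nat.dist k t) * Γ t else 0) := hsplit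
    _ ≤ ε / 2 + ε / 2 := add_le_add (le_trans hhead_le (hK _ (by omega))) htail_le
    _ = ε := ENNReal.add_halves ε

lemma aux_sigmaNorm_one {E : Type*} (N : E → ℝ) (σ : ℝ) (u : ℕ → E) :
    sigmaNorm N σ 1 u = ∑' k : ℕ, ENNReal.ofReal ((2:ℝ) ^ ((k:ℝ) * σ) * N (u k)) := by
  unfold sigmaNorm
  rw [if_neg ENNReal.one_ne_top]
  simp [ENNReal.rpow_one]

lemma aux_sigmaNorm_top {E : Type*} (N : E → ℝ) (σ : ℝ) (u : ℕ → E) :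
    sigmaNorm N σ ⊤ u = ⨆ k : ℕ, ENNReal.ofReal ((2:ℝ) ^ ((k:ℝ) * σ) * N (u k)) := by
  unfold sigmaNorm
  rw [if_pos rfl]

lemma aux_ofReal_weight (u v x : ℝ) :
    ENNReal.ofReal ((2:ℝ) ^ (u + v) * x)
      = ENNReal.ofReal ((2:ℝ) ^ u) * ENNReal.ofReal ((2:ℝ) ^ v * x) := by
  rw [Real.rpow_add two_pos, mul_assoc,
    ENNReal.ofReal_mul (Real.rpow_nonneg (by norm_num) u)]

/-- Proposition 3.7: under the weak Lipschitz and tame estimates, for every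
`f ∈ B_{s,q}(0,r)`, `Φ(f)` belongs to `Σ^s_q(F)`, the elements `Φ(S_n f)` are
well-defined (each `S_n f` lies in the ball), and `Φ(S_n f) → Φ(f)` in `Σ^s_q(F)`. -/
theorem Phi_mem_and_tendsto_sigma
    {E F : Type*} [AddCommGroup E] [Module ℝ E] [AddCommGroup F] [Module ℝ F]
    (NE : E → ℝ) (NF : F → ℝ) (hNE : IsPseudoNorm NE) (hNF : IsPseudoNorm NF)
    (s₀ s s₁ : ℝ) (hs₀ : s₀ < s) (hs₁ : s < s₁)
    (q : ℝ≥0∞) (hq : 1 ≤ q) (r : ℝ) (hr : 0 < r)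
    (Φ : (ℕ → E) → (ℕ → F))
    (hΦmem : ∀ v, memSigma NE s q v → sigmaNorm NE s q v < ENNReal.ofReal r →
      memSigma NF s₀ ⊤ (Φ v))
    (C₀ : ℝ) (hC₀ : 0 < C₀)
    (hlip : ∀ v w, memSigma NE s q v → sigmaNorm NE s q v < ENNReal.ofReal r →
      memSigma NE s q w → sigmaNorm NE s q w < ENNReal.ofReal r →
      sigmaNorm NF s₀ ⊤ (Φ v - Φ w) ≤ ENNReal.ofReal C₀ * sigmaNorm NE s₀ 1 (v - w))
    (C₁ : ℝ) (hC₁ : 0 < C₁)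
    (htame : ∀ v, (∀ σ : ℝ, memSigma NE σ 1 v) →
      memSigma NE s q v → sigmaNorm NE s q v < ENNReal.ofReal r →
      sigmaNorm NF s₁ ⊤ (Φ v) ≤ ENNReal.ofReal C₁ * sigmaNorm NE s₁ 1 v)
    (f : ℕ → E) (hfmem : memSigma NE s q f)
    (hfball : sigmaNorm NE s q f < ENNReal.ofReal r) :
    memSigma NF s q (Φ f) ∧
    (∀ n : ℕ, memSigma NE s q (smoothS n f) ∧
      sigmaNorm NE s q (smoothS n f) < ENNReal.ofReal r) ∧
    Tendsto (fun n : ℕ => sigmaNorm NF s q (Φ f - Φ (smoothS n f))) atTop (nhds 0) := by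
  classical
  have hNE0 : NE 0 = 0 := (hNE.eq_zero_iff 0).mpr rfl
  have hpow_pos : ∀ x : ℝ, (0:ℝ) < (2:ℝ) ^ x := fun x => Real.rpow_pos_of_pos two_pos x
  -- Part 2 : the truncations stay in the ball
  have hterm : ∀ (n k : ℕ), ENNReal.ofReal ((2:ℝ) ^ ((k:ℝ)*s) * NE (smoothS n f k))
      ≤ ENNReal.ofReal ((2:ℝ) ^ ((k:ℝ)*s) * NE (f k)) := by
    intro n k
    apply ENNReal.ofReal_le_ofReal
    apply mul_le_mul_of_nonneg_left _ (hpow_pos _).le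
    by_cases h : k ≤ n
    · simp [smoothS, h]
    · simp only [smoothS, if_neg h, hNE0]
      exact hNE.nonneg _
  have hSnorm_le : ∀ n, sigmaNorm NE s q (smoothS n f) ≤ sigmaNorm NE s q f := by
    intro n
    unfold sigmaNorm
    split
    · exact iSup_mono (hterm n)
    · apply ENNReal.rpow_le_rpow _ (div_nonneg zero_le_one ENNReal.toReal_nonneg)
      exact ENNReal.tsum_le_tsum fun k =>
        ENNReal.rpow_le_rpow (hterm n k) ENNReal.toReal_nonneg
  have hSball : ∀ n, sigmaNorm NE s q (smoothS n f) < ENNReal.ofReal r :=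
    fun n => (hSnorm_le n).trans_lt hfball
  have hSmem : ∀ n, memSigma NE s q (smoothS n f) := by
    intro n
    unfold memSigma
    by_cases hqT : q = ⊤
    · rw [if_pos hqT]
      apply Filter.Tendsto.congr' _ (tendsto_const_nhds (x := (0:ℝ)))
      filter_upwards [eventually_gt_atTop n] with k hk
      have hkn : ¬ k ≤ n := by omega
      simp [smoothS, hkn, hNE0]
    · rw [if_neg hqT]
      unfold memSigma at hfmem
      rw [if_neg hqT] at hfmem
      exact (hSnorm_le n).trans_lt hfmem
  -- basic bound on single terms
  have hA_lt_r : ∀ t : ℕ, ENNReal.ofReal ((2:ℝ) ^ ((t:ℝ)*s) * NE (f t)) < ENNReal.ofReal r := by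
    intro t
    have hfb := hfball
    unfold sigmaNorm at hfb
    by_cases hqT : q = ⊤
    · rw [if_pos hqT] at hfb
      exact lt_of_le_of_lt
        (le_iSup (fun k : ℕ => ENNReal.ofReal ((2:ℝ) ^ ((k:ℝ)*s) * NE (f k))) t) hfb
    · rw [if_neg hqT] at hfb
      have hp1 : 1 ≤ q.toReal := by
        rw [← ENNReal.toReal_one]
        exact ENNReal.toReal_mono hqT hq
      have hp0 : (0:ℝ) < q.toReal := one_pos.trans_le hp1
      calc ENNReal.ofReal ((2:ℝ) ^ ((t:ℝ)*s) * NE (f t))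
          = (ENNReal.ofReal ((2:ℝ) ^ ((t:ℝ)*s) * NE (f t)) ^ q.toReal) ^ (1/q.toReal) :=
            (aux_rpow_collapse hp0.ne' _).symm
        _ ≤ (∑' k : ℕ, ENNReal.ofReal ((2:ℝ) ^ ((k:ℝ)*s) * NE (f k)) ^ q.toReal) ^ (1/q.toReal) :=
            ENNReal.rpow_le_rpow
              (ENNReal.le_tsum t) (by positivity)
        _ < ENNReal.ofReal r := hfb
  have ha_nn : ∀ t : ℕ, (0:ℝ) ≤ (2:ℝ) ^ ((t:ℝ)*s) * NE (f t) :=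
    fun t => mul_nonneg (hpow_pos _).le (hNE.nonneg _)
  have ha_lt_r : ∀ t : ℕ, (2:ℝ) ^ ((t:ℝ)*s) * NE (f t) < r :=
    fun t => (ENNReal.ofReal_lt_ofReal_iff hr).mp (hA_lt_r t)
  -- geometric ratios
  set ρ₀ᵣ : ℝ := (2:ℝ) ^ (s₀ - s) with hρ₀def
  set ρ₁ᵣ : ℝ := (2:ℝ) ^ (s - s₁) with hρ₁def
  have hρ₀pos : 0 < ρ₀ᵣ := hpow_pos _
  have hρ₁pos : 0 < ρ₁ᵣ := hpow_pos _
  have hρ₀lt1 : ρ₀ᵣ < 1 := Real.rpow_lt_one_of_one_lt_of_neg one_lt_two (by linarith)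
  have hρ₁lt1 : ρ₁ᵣ < 1 := Real.rpow_lt_one_of_one_lt_of_neg one_lt_two (by linarith)
  set ρᵣ : ℝ := max ρ₀ᵣ ρ₁ᵣ with hρrdef
  have hρpos : 0 < ρᵣ := lt_max_of_lt_left hρ₀pos
  have hρlt1 : ρᵣ < 1 := max_lt hρ₀lt1 hρ₁lt1
  set ρ : ℝ≥0∞ := ENNReal.ofReal ρᵣ with hρdef
  have hρE : ρ < 1 := ENNReal.ofReal_lt_one.mpr hρlt1
  set ρ₁ : ℝ≥0∞ := ENNReal.ofReal ρ₁ᵣ with hρ₁Edef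
  have hρ₁E1 : ρ₁ < 1 := ENNReal.ofReal_lt_one.mpr hρ₁lt1
  -- the sequences a, A, W, Γ
  set a : ℕ → ℝ := fun t => (2:ℝ) ^ ((t:ℝ) * s) * NE (f t) with hadef
  set A : ℕ → ℝ≥0∞ := fun t => ENNReal.ofReal (a t) with hAdef
  have hA_ne_top : ∀ t, A t ≠ ⊤ := fun t => ENNReal.ofReal_ne_top
  set W : ℕ → ℝ := fun t => ∑ j ∈ Finset.range (t+1), ρ₁ᵣ ^ (t - j) * a j with hWdef
  have hW_nn : ∀ t, 0 ≤ W t := fun t =>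
    Finset.sum_nonneg fun j _ => mul_nonneg (pow_nonneg hρ₁pos.le _) (ha_nn j)
  set Γr : ℕ → ℝ := fun t => a t + W t with hΓrdef
  have hΓr_nn : ∀ t, 0 ≤ Γr t := fun t => add_nonneg (ha_nn t) (hW_nn t)
  set ΓE : ℕ → ℝ≥0∞ := fun t => ENNReal.ofReal (Γr t) with hΓEdef
  have hΓE_ne_top : ∀ t, ΓE t ≠ ⊤ := fun t => ENNReal.ofReal_ne_top
  have hΓE_eq : ∀ t, ΓE t = A t + ENNReal.ofReal (W t) :=
    fun t => ENNReal.ofReal_add (ha_nn t) (hW_nn t)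
  have hWE_le_conv : ∀ t, ENNReal.ofReal (W t) ≤ ∑' j, ρ₁ ^ (Nat.dist t j) * A j := by
    intro t
    rw [hWdef, ENNReal.ofReal_sum_of_nonneg
      (fun j _ => mul_nonneg (pow_nonneg hρ₁pos.le _) (ha_nn j))]
    have h1 : ∀ j ∈ Finset.range (t+1),
        ENNReal.ofReal (ρ₁ᵣ ^ (t - j) * a j) = ρ₁ ^ (Nat.dist t j) * A j := by
      intro j hj
      have hjt : j ≤ t := Nat.lt_succ_iff.mp (Finset.mem_range.mp hj)
      rw [ENNReal.ofReal_mul (pow_nonneg hρ₁pos.le _), ENNReal.ofReal_pow hρ₁pos.le,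
        Nat.dist_eq_sub_of_le_right hjt]
    rw [Finset.sum_congr rfl h1]
    exact ENNReal.sum_le_tsum _
  -- truncations lie in every Σ^σ_1
  have hS1 : ∀ (σ : ℝ) (n : ℕ), memSigma NE σ 1 (smoothS n f) := by
    intro σ n
    have hnorm : sigmaNorm NE σ 1 (smoothS n f)
        = ∑ k ∈ Finset.range (n+1), ENNReal.ofReal ((2:ℝ) ^ ((k:ℝ)*σ) * NE (smoothS n f k)) := by
      rw [aux_sigmaNorm_one]
      apply tsum_eq_sum
      intro b hb
      have hbn : ¬ b ≤ n := fun h => hb (Finset.mem_range.2 (by omega))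
      simp [smoothS, hbn, hNE0]
    unfold memSigma
    rw [if_neg ENNReal.one_ne_top, hnorm]
    exact ENNReal.sum_lt_top.mpr fun k _ => ENNReal.ofReal_lt_top
  -- the Σ^{s₁}_1 norms of truncations
  set v : ℕ → ℝ := fun t => ∑ j ∈ Finset.range (t+1), (2:ℝ) ^ ((j:ℝ)*s₁) * NE (f j) with hvdef
  have hv_nn : ∀ t, 0 ≤ v t := fun t =>
    Finset.sum_nonneg fun j _ => mul_nonneg (hpow_pos _).le (hNE.nonneg _)
  have hv_mono : ∀ t, v t ≤ v (t+1) := fun t =>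
    Finset.sum_le_sum_of_subset_of_nonneg (Finset.range_subset_range.2 (by omega))
      (fun j _ _ => mul_nonneg (hpow_pos _).le (hNE.nonneg _))
  have hsig_v : ∀ t, sigmaNorm NE s₁ 1 (smoothS t f) = ENNReal.ofReal (v t) := by
    intro t
    have h0 : ∀ b ∉ Finset.range (t+1),
        ENNReal.ofReal ((2:ℝ) ^ ((b:ℝ)*s₁) * NE (smoothS t f b)) = 0 := by
      intro b hb
      have hbt : ¬ b ≤ t := fun h => hb (Finset.mem_range.2 (by omega))
      simp [smoothS, hbt, hNE0]
    rw [aux_sigmaNorm_one, tsum_eq_sum h0, hvdef, ENNReal.ofReal_sum_of_nonneg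
      (fun j _ => mul_nonneg (hpow_pos _).le (hNE.nonneg _))]
    apply Finset.sum_congr rfl
    intro j hj
    have hjt : j ≤ t := Nat.lt_succ_iff.mp (Finset.mem_range.mp hj)
    simp [smoothS, hjt]
  have htame_comp : ∀ (t k : ℕ), (2:ℝ) ^ ((k:ℝ)*s₁) * NF (Φ (smoothS t f) k) ≤ C₁ * v t := by
    intro t k
    have h1 := htame (smoothS t f) (fun σ => hS1 σ t) (hSmem t) (hSball t)
    rw [aux_sigmaNorm_top, hsig_v t, ← ENNReal.ofReal_mul hC₁.le] at h1
    have h2 : ENNReal.ofReal ((2:ℝ) ^ ((k:ℝ)*s₁) * NF (Φ (smoothS t f) k))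
        ≤ ENNReal.ofReal (C₁ * v t) :=
      le_trans (le_iSup (fun k : ℕ =>
        ENNReal.ofReal ((2:ℝ) ^ ((k:ℝ)*s₁) * NF (Φ (smoothS t f) k))) k) h1
    exact (ENNReal.ofReal_le_ofReal_iff (mul_nonneg hC₁.le (hv_nn t))).mp h2
  -- componentwise Lipschitz estimate
  have hlip_comp : ∀ (u w : ℕ → E), memSigma NE s q u → sigmaNorm NE s q u < ENNReal.ofReal r →
      memSigma NE s q w → sigmaNorm NE s q w < ENNReal.ofReal r →
      ∀ k : ℕ, ENNReal.ofReal ((2:ℝ) ^ ((k:ℝ)*s₀) * NF ((Φ u - Φ w) k))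
        ≤ ENNReal.ofReal C₀ * sigmaNorm NE s₀ 1 (u - w) := by
    intro u w hu1 hu2 hw1 hw2 k
    have h1 := hlip u w hu1 hu2 hw1 hw2
    rw [aux_sigmaNorm_top] at h1
    exact le_trans (le_iSup (fun k : ℕ =>
      ENNReal.ofReal ((2:ℝ) ^ ((k:ℝ)*s₀) * NF ((Φ u - Φ w) k))) k) h1
  -- difference of consecutive truncations is a single mode
  have hdiff_single : ∀ m : ℕ, sigmaNorm NE s₀ 1 (smoothS (m+1) f - smoothS m f)
      = ENNReal.ofReal ((2:ℝ) ^ (((m+1 : ℕ):ℝ)*s₀) * NE (f (m+1))) := by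
    intro m
    rw [aux_sigmaNorm_one]
    rw [tsum_eq_single (m+1)]
    · have h1 : (smoothS (m+1) f - smoothS m f) (m+1) = f (m+1) := by
        have e1 : ¬ (m+1 ≤ m) := by omega
        simp [smoothS, Pi.sub_apply, e1]
      rw [h1]
    · intro b hb
      have h1 : (smoothS (m+1) f - smoothS m f) b = 0 := by
        rcases le_or_gt b m with h | h
        · simp [smoothS, Pi.sub_apply, h, (by omega : b ≤ m+1)]
        · have h1 : ¬ b ≤ m := by omega
          have h2 : ¬ b ≤ m + 1 := by omega
          simp [smoothS, Pi.sub_apply, h1, h2]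
      rw [h1, hNE0, mul_zero, ENNReal.ofReal_zero]
  have hlip_D : ∀ (m k : ℕ),
      (2:ℝ) ^ ((k:ℝ)*s₀) * NF ((Φ (smoothS (m+1) f) - Φ (smoothS m f)) k)
      ≤ C₀ * ((2:ℝ) ^ (((m+1 : ℕ):ℝ)*s₀) * NE (f (m+1))) := by
    intro m k
    have h1 := hlip_comp (smoothS (m+1) f) (smoothS m f)
      (hSmem _) (hSball _) (hSmem _) (hSball _) k
    rw [hdiff_single m, ← ENNReal.ofReal_mul hC₀.le] at h1
    exact (ENNReal.ofReal_le_ofReal_iff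
      (mul_nonneg hC₀.le (mul_nonneg (hpow_pos _).le (hNE.nonneg _)))).mp h1
  set Cb : ℝ := C₀ + 2*C₁ with hCbdef
  have hCb_pos : 0 < Cb := by rw [hCbdef]; linarith
  -- key componentwise estimate on the dyadic pieces
  have hG : ∀ (m k : ℕ),
      (2:ℝ) ^ ((k:ℝ)*s) * NF ((Φ (smoothS (m+1) f) - Φ (smoothS m f)) k)
      ≤ Cb * (ρᵣ ^ (Nat.dist k (m+1)) * Γr (m+1)) := by
    intro m k
    rcases le_or_gt k (m+1) with hkm | hkm
    · -- low frequencies : Lipschitz estimate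
      have h1 := hlip_D m k
      have hcast : ((m+1-k : ℕ):ℝ) = ((m+1 : ℕ):ℝ) - (k:ℝ) := by
        push_cast [hkm]
        ring
      have hpow : ρ₀ᵣ ^ (m+1-k) = (2:ℝ) ^ ((((m+1 : ℕ):ℝ) - (k:ℝ)) * (s₀ - s)) := by
        rw [hρ₀def, ← Real.rpow_natCast ((2:ℝ) ^ (s₀ - s)) (m+1-k),
          ← Real.rpow_mul (le_of_lt two_pos), hcast]
        congr 1
        ring
      have hexp : (2:ℝ) ^ ((k:ℝ)*(s-s₀)) * (2:ℝ) ^ (((m+1 : ℕ):ℝ)*s₀)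
          = ρ₀ᵣ ^ (m+1-k) * (2:ℝ) ^ (((m+1 : ℕ):ℝ)*s) := by
        rw [hpow, ← Real.rpow_add two_pos, ← Real.rpow_add two_pos]
        congr 1
        push_cast
        ring
      have h2 : (2:ℝ) ^ ((k:ℝ)*s) = (2:ℝ) ^ ((k:ℝ)*(s-s₀)) * (2:ℝ) ^ ((k:ℝ)*s₀) := by
        rw [← Real.rpow_add two_pos]
        congr 1
        ring
      calc (2:ℝ) ^ ((k:ℝ)*s) * NF ((Φ (smoothS (m+1) f) - Φ (smoothS m f)) k)
          = (2:ℝ) ^ ((k:ℝ)*(s-s₀))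
            * ((2:ℝ) ^ ((k:ℝ)*s₀) * NF ((Φ (smoothS (m+1) f) - Φ (smoothS m f)) k)) := by
            rw [h2, mul_assoc]
        _ ≤ (2:ℝ) ^ ((k:ℝ)*(s-s₀)) * (C₀ * ((2:ℝ) ^ (((m+1 : ℕ):ℝ)*s₀) * NE (f (m+1)))) :=
            mul_le_mul_of_nonneg_left h1 (hpow_pos _).le
        _ = C₀ * (((2:ℝ) ^ ((k:ℝ)*(s-s₀)) * (2:ℝ) ^ (((m+1 : ℕ):ℝ)*s₀)) * NE (f (m+1))) := by
            ring
        _ = C₀ * (ρ₀ᵣ ^ (m+1-k) * a (m+1)) := by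
            rw [hexp, hadef, mul_assoc]
        _ ≤ Cb * (ρᵣ ^ (Nat.dist k (m+1)) * Γr (m+1)) := by
            rw [Nat.dist_eq_sub_of_le hkm]
            have h3 : ρ₀ᵣ ^ (m+1-k) ≤ ρᵣ ^ (m+1-k) :=
              pow_le_pow_left₀ hρ₀pos.le (le_max_left _ _) _
            have h4 : a (m+1) ≤ Γr (m+1) := by
              rw [hΓrdef]
              exact le_add_of_nonneg_right (hW_nn _)
            have h5 : C₀ ≤ Cb := by rw [hCbdef]; linarith
            have h6 : ρ₀ᵣ ^ (m+1-k) * a (m+1) ≤ ρᵣ ^ (m+1-k) * Γr (m+1) :=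
              mul_le_mul h3 h4 (ha_nn _) (pow_nonneg (hρpos.le) _)
            exact mul_le_mul h5 h6
              (mul_nonneg (pow_nonneg hρ₀pos.le _) (ha_nn _)) hCb_pos.le
    · -- high frequencies : tame estimate
      have htri : NF ((Φ (smoothS (m+1) f) - Φ (smoothS m f)) k)
          ≤ NF (Φ (smoothS (m+1) f) k) + NF (Φ (smoothS m f) k) := by
        have hd : (Φ (smoothS (m+1) f) - Φ (smoothS m f)) k
            = Φ (smoothS (m+1) f) k + (- Φ (smoothS m f) k) := by
          simp [Pi.sub_apply, sub_eq_add_neg]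
        rw [hd]
        refine le_trans (hNF.add_le _ _) ?_
        rw [hNF.neg]
      have h2 : (2:ℝ) ^ ((k:ℝ)*s) = (2:ℝ) ^ ((k:ℝ)*(s-s₁)) * (2:ℝ) ^ ((k:ℝ)*s₁) := by
        rw [← Real.rpow_add two_pos]
        congr 1
        ring
      have hkey : (2:ℝ) ^ ((k:ℝ)*(s-s₁)) * v (m+1) = ρ₁ᵣ ^ (k-(m+1)) * W (m+1) := by
        rw [hvdef, hWdef, Finset.mul_sum, Finset.mul_sum]
        apply Finset.sum_congr rfl
        intro j hj
        have hjm : j ≤ m+1 := Nat.lt_succ_iff.mp (Finset.mem_range.mp hj)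
        have hjk : j ≤ k := by omega
        have hsplitpow : ρ₁ᵣ ^ (k-(m+1)) * ρ₁ᵣ ^ (m+1-j) = ρ₁ᵣ ^ (k-j) := by
          rw [← pow_add]
          congr 1
          omega
        have hcast1 : ((k - j : ℕ):ℝ) = (k:ℝ) - (j:ℝ) := by
          push_cast [hjk]
          ring
        have e1 : ρ₁ᵣ ^ (k-j) = (2:ℝ) ^ (((k:ℝ) - (j:ℝ)) * (s-s₁)) := by
          rw [hρ₁def, ← Real.rpow_natCast ((2:ℝ) ^ (s-s₁)) (k-j),
            ← Real.rpow_mul (le_of_lt two_pos), hcast1]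
          congr 1
          ring
        calc (2:ℝ) ^ ((k:ℝ)*(s-s₁)) * ((2:ℝ) ^ ((j:ℝ)*s₁) * NE (f j))
            = (2:ℝ) ^ (((k:ℝ)-(j:ℝ))*(s-s₁)) * ((2:ℝ) ^ ((j:ℝ)*s) * NE (f j)) := by
              rw [← mul_assoc, ← mul_assoc, ← Real.rpow_add two_pos, ← Real.rpow_add two_pos]
              congr 2
              ring
          _ = ρ₁ᵣ ^ (k-j) * a j := by rw [e1, hadef]
          _ = ρ₁ᵣ ^ (k-(m+1)) * (ρ₁ᵣ ^ (m+1-j) * a j) := by rw [← hsplitpow, mul_assoc]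
      calc (2:ℝ) ^ ((k:ℝ)*s) * NF ((Φ (smoothS (m+1) f) - Φ (smoothS m f)) k)
          ≤ (2:ℝ) ^ ((k:ℝ)*s) * (NF (Φ (smoothS (m+1) f) k) + NF (Φ (smoothS m f) k)) :=
            mul_le_mul_of_nonneg_left htri (hpow_pos _).le
        _ = (2:ℝ) ^ ((k:ℝ)*(s-s₁)) * ((2:ℝ) ^ ((k:ℝ)*s₁) * NF (Φ (smoothS (m+1) f) k)
              + (2:ℝ) ^ ((k:ℝ)*s₁) * NF (Φ (smoothS m f) k)) := by
            rw [h2]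
            ring
        _ ≤ (2:ℝ) ^ ((k:ℝ)*(s-s₁)) * (C₁ * v (m+1) + C₁ * v m) :=
            mul_le_mul_of_nonneg_left
              (add_le_add (htame_comp (m+1) k) (htame_comp m k)) (hpow_pos _).le
        _ ≤ (2:ℝ) ^ ((k:ℝ)*(s-s₁)) * (2*C₁ * v (m+1)) := by
            apply mul_le_mul_of_nonneg_left _ (hpow_pos _).le
            have := mul_le_mul_of_nonneg_left (hv_mono m) hC₁.le
            linarith
        _ = 2*C₁ * ((2:ℝ) ^ ((k:ℝ)*(s-s₁)) * v (m+1)) := by ring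
        _ = 2*C₁ * (ρ₁ᵣ ^ (k-(m+1)) * W (m+1)) := by rw [hkey]
        _ ≤ Cb * (ρᵣ ^ (Nat.dist k (m+1)) * Γr (m+1)) := by
            rw [Nat.dist_eq_sub_of_le_right (le_of_lt hkm)]
            have h3 : ρ₁ᵣ ^ (k-(m+1)) ≤ ρᵣ ^ (k-(m+1)) :=
              pow_le_pow_left₀ hρ₁pos.le (le_max_right _ _) _
            have h4 : W (m+1) ≤ Γr (m+1) := by
              rw [hΓrdef]
              exact le_add_of_nonneg_left (ha_nn _)
            have h5 : 2*C₁ ≤ Cb := by rw [hCbdef]; linarith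
            have h6 : ρ₁ᵣ ^ (k-(m+1)) * W (m+1) ≤ ρᵣ ^ (k-(m+1)) * Γr (m+1) :=
              mul_le_mul h3 h4 (hW_nn _) (pow_nonneg (hρpos.le) _)
            exact mul_le_mul h5 h6
              (mul_nonneg (pow_nonneg hρ₁pos.le _) (hW_nn _)) hCb_pos.le
  have hGE : ∀ (m k : ℕ),
      ENNReal.ofReal ((2:ℝ) ^ ((k:ℝ)*s) * NF ((Φ (smoothS (m+1) f) - Φ (smoothS m f)) k))
      ≤ ENNReal.ofReal Cb * (ρ ^ (Nat.dist k (m+1)) * ΓE (m+1)) := by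
    intro m k
    refine le_trans (ENNReal.ofReal_le_ofReal (hG m k)) ?_
    rw [ENNReal.ofReal_mul hCb_pos.le,
      ENNReal.ofReal_mul (pow_nonneg hρpos.le _), ENNReal.ofReal_pow hρpos.le]
  -- telescoping
  set bE : ℕ → ℕ → ℝ≥0∞ :=
    fun n k => ENNReal.ofReal ((2:ℝ) ^ ((k:ℝ)*s) * NF ((Φ f - Φ (smoothS n f)) k)) with hbEdef
  have htel : ∀ (n M k : ℕ), n ≤ M → bE n k ≤ bE M k
      + ∑ m ∈ Finset.Ico n M,
        ENNReal.ofReal ((2:ℝ) ^ ((k:ℝ)*s) * NF ((Φ (smoothS (m+1) f) - Φ (smoothS m f)) k)) := by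
    intro n M k hnM
    induction M, hnM using Nat.le_induction with
    | base => simp
    | succ M hnM ih =>
      have hdecomp : (Φ f - Φ (smoothS M f)) k
          = (Φ f - Φ (smoothS (M+1) f)) k + (Φ (smoothS (M+1) f) - Φ (smoothS M f)) k := by
        simp only [Pi.sub_apply]
        abel
      have hreal : (2:ℝ) ^ ((k:ℝ)*s) * NF ((Φ f - Φ (smoothS M f)) k)
          ≤ (2:ℝ) ^ ((k:ℝ)*s) * NF ((Φ f - Φ (smoothS (M+1) f)) k)
            + (2:ℝ) ^ ((k:ℝ)*s) * NF ((Φ (smoothS (M+1) f) - Φ (smoothS M f)) k) := by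
        rw [← mul_add]
        apply mul_le_mul_of_nonneg_left _ (hpow_pos _).le
        rw [hdecomp]
        exact hNF.add_le _ _
      have step : bE M k ≤ bE (M+1) k
          + ENNReal.ofReal ((2:ℝ) ^ ((k:ℝ)*s) * NF ((Φ (smoothS (M+1) f) - Φ (smoothS M f)) k)) :=
        le_trans (ENNReal.ofReal_le_ofReal hreal) ENNReal.ofReal_add_le
      calc bE n k ≤ bE M k + ∑ m ∈ Finset.Ico n M,
            ENNReal.ofReal ((2:ℝ) ^ ((k:ℝ)*s)
              * NF ((Φ (smoothS (m+1) f) - Φ (smoothS m f)) k)) := ih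
        _ ≤ (bE (M+1) k
              + ENNReal.ofReal ((2:ℝ) ^ ((k:ℝ)*s)
                * NF ((Φ (smoothS (M+1) f) - Φ (smoothS M f)) k)))
            + ∑ m ∈ Finset.Ico n M,
              ENNReal.ofReal ((2:ℝ) ^ ((k:ℝ)*s)
                * NF ((Φ (smoothS (m+1) f) - Φ (smoothS m f)) k)) := add_le_add_left step _
        _ = bE (M+1) k + ∑ m ∈ Finset.Ico n (M+1),
              ENNReal.ofReal ((2:ℝ) ^ ((k:ℝ)*s)
                * NF ((Φ (smoothS (m+1) f) - Φ (smoothS m f)) k)) := by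
            rw [Finset.sum_Ico_succ_top hnM]
            ring
  -- the tail norms tend to zero
  set g0 : ℕ → ℝ≥0∞ := fun j => ENNReal.ofReal ((2:ℝ) ^ ((j:ℝ)*s₀) * NE (f j)) with hg0def
  have hg0_le : ∀ j : ℕ, g0 j ≤ ENNReal.ofReal ρ₀ᵣ ^ j * ENNReal.ofReal r := by
    intro j
    rw [← ENNReal.ofReal_pow hρ₀pos.le, ← ENNReal.ofReal_mul (pow_nonneg hρ₀pos.le _)]
    apply ENNReal.ofReal_le_ofReal
    have e0 : ρ₀ᵣ ^ j = (2:ℝ) ^ ((j:ℝ)*(s₀ - s)) := by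
      rw [hρ₀def, ← Real.rpow_natCast ((2:ℝ) ^ (s₀-s)) j, ← Real.rpow_mul (le_of_lt two_pos)]
      congr 1
      ring
    have e1 : (2:ℝ) ^ ((j:ℝ)*s₀) * NE (f j) = ρ₀ᵣ ^ j * a j := by
      rw [e0, hadef, ← mul_assoc, ← Real.rpow_add two_pos]
      congr 2
      ring
    rw [e1]
    exact mul_le_mul_of_nonneg_left (ha_lt_r j).le (pow_nonneg hρ₀pos.le _)
  have hg0_sum_ne_top : (∑' j, g0 j) ≠ ⊤ := by
    apply ne_top_of_le_ne_top _ (ENNReal.tsum_le_tsum hg0_le)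
    rw [ENNReal.tsum_mul_right, ENNReal.tsum_geometric]
    exact ENNReal.mul_ne_top
      (by rw [ENNReal.inv_ne_top]
          exact (tsub_pos_of_lt (ENNReal.ofReal_lt_one.mpr hρ₀lt1)).ne')
      ENNReal.ofReal_ne_top
  have hT_eq : ∀ M : ℕ, sigmaNorm NE s₀ 1 (f - smoothS M f)
      = ∑' j, (if M + 1 ≤ j then g0 j else 0) := by
    intro M
    rw [aux_sigmaNorm_one]
    apply tsum_congr
    intro j
    by_cases h : j ≤ M
    · rw [if_neg (by omega)]
      have h1 : (f - smoothS M f) j = 0 := by simp [smoothS, Pi.sub_apply, h]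
      rw [h1, hNE0, mul_zero, ENNReal.ofReal_zero]
    · rw [if_pos (by omega)]
      have h1 : (f - smoothS M f) j = f j := by simp [smoothS, Pi.sub_apply, h]
      rw [h1]
  have hT0 : Tendsto (fun M => sigmaNorm NE s₀ 1 (f - smoothS M f)) atTop (nhds 0) := by
    have h1 := (aux_tail_tendsto hg0_sum_ne_top).comp (tendsto_add_atTop_nat 1)
    exact Tendsto.congr (fun M => (hT_eq M).symm) h1
  have hbM0 : ∀ k : ℕ, Tendsto (fun M => bE M k) atTop (nhds 0) := by
    intro k
    have hub : ∀ M : ℕ, bE M k ≤ ENNReal.ofReal ((2:ℝ) ^ ((k:ℝ)*(s - s₀)))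
        * (ENNReal.ofReal C₀ * sigmaNorm NE s₀ 1 (f - smoothS M f)) := by
      intro M
      have h1 := hlip_comp f (smoothS M f) hfmem hfball (hSmem M) (hSball M) k
      have h2 : bE M k = ENNReal.ofReal ((2:ℝ) ^ ((k:ℝ)*(s-s₀)))
          * ENNReal.ofReal ((2:ℝ) ^ ((k:ℝ)*s₀) * NF ((Φ f - Φ (smoothS M f)) k)) := by
        have e1 : (k:ℝ)*s = (k:ℝ)*(s-s₀) + (k:ℝ)*s₀ := by ring
        show ENNReal.ofReal ((2:ℝ) ^ ((k:ℝ)*s) * NF ((Φ f - Φ (smoothS M f)) k)) = _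
        rw [e1, aux_ofReal_weight]
      rw [h2]
      exact mul_le_mul_right h1 _
    have hlim : Tendsto (fun M => ENNReal.ofReal ((2:ℝ) ^ ((k:ℝ)*(s-s₀)))
        * (ENNReal.ofReal C₀ * sigmaNorm NE s₀ 1 (f - smoothS M f))) atTop (nhds 0) := by
      have h1 : Tendsto (fun M => ENNReal.ofReal C₀ * sigmaNorm NE s₀ 1 (f - smoothS M f))
          atTop (nhds 0) := by
        have h := ENNReal.Tendsto.const_mul (a := ENNReal.ofReal C₀) hT0
          (Or.inr ENNReal.ofReal_ne_top)
        rwa [mul_zero] at h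
      have h := ENNReal.Tendsto.const_mul (a := ENNReal.ofReal ((2:ℝ) ^ ((k:ℝ)*(s-s₀)))) h1
        (Or.inr ENNReal.ofReal_ne_top)
      rwa [mul_zero] at h
    exact tendsto_of_tendsto_of_tendsto_of_le_of_le tendsto_const_nhds hlim
      (fun M => zero_le) hub
  -- the master estimate
  set Ψ : ℕ → ℕ → ℝ≥0∞ :=
    fun N k => ∑' t, ρ ^ (Nat.dist k t) * (if N ≤ t then ΓE t else 0) with hΨdef
  have hmaster : ∀ (n k : ℕ), bE n k ≤ ENNReal.ofReal Cb * Ψ (n+1) k := by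
    intro n k
    set GEf : ℕ → ℝ≥0∞ := fun m =>
      ENNReal.ofReal ((2:ℝ) ^ ((k:ℝ)*s)
        * NF ((Φ (smoothS (m+1) f) - Φ (smoothS m f)) k)) with hGEfdef
    have hc : bE n k ≤ ∑' m, (if n ≤ m then GEf m else 0) := by
      have hlim : Tendsto (fun M => bE M k + ∑' m, (if n ≤ m then GEf m else 0)) atTop
          (nhds (∑' m, (if n ≤ m then GEf m else 0))) := by
        have h := (hbM0 k).add_const (∑' m, (if n ≤ m then GEf m else 0))
        rwa [zero_add] at h
      apply ge_of_tendsto hlim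
      filter_upwards [eventually_ge_atTop n] with M hM
      calc bE n k ≤ bE M k + ∑ m ∈ Finset.Ico n M, GEf m := htel n M k hM
        _ ≤ bE M k + ∑' m, (if n ≤ m then GEf m else 0) := by
            apply add_le_add_right
            have hcong : ∀ m ∈ Finset.Ico n M, GEf m = (if n ≤ m then GEf m else 0) := by
              intro m hm
              rw [if_pos (Finset.mem_Ico.mp hm).1]
            rw [Finset.sum_congr rfl hcong]
            exact ENNReal.sum_le_tsum _
    refine hc.trans ?_
    have h1 : ∀ m : ℕ, (if n ≤ m then GEf m else 0)
        ≤ ENNReal.ofReal Cb * (ρ ^ (Nat.dist k (m+1)) * (if n+1 ≤ m+1 then ΓE (m+1) else 0)) := by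
      intro m
      by_cases h : n ≤ m
      · rw [if_pos h, if_pos (by omega : n+1 ≤ m+1)]
        exact hGE m k
      · rw [if_neg h]
        exact zero_le
    calc (∑' m, (if n ≤ m then GEf m else 0))
        ≤ ∑' m, ENNReal.ofReal Cb
            * (ρ ^ (Nat.dist k (m+1)) * (if n+1 ≤ m+1 then ΓE (m+1) else 0)) :=
          ENNReal.tsum_le_tsum h1
      _ = ENNReal.ofReal Cb
            * ∑' m, ρ ^ (Nat.dist k (m+1)) * (if n+1 ≤ m+1 then ΓE (m+1) else 0) :=
          ENNReal.tsum_mul_left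
      _ = ENNReal.ofReal Cb * Ψ (n+1) k := by
          congr 1
          show _ = ∑' t, ρ ^ (Nat.dist k t) * (if n+1 ≤ t then ΓE t else 0)
          rw [tsum_eq_zero_add'
            (f := fun t => ρ ^ (Nat.dist k t) * (if n+1 ≤ t then ΓE t else 0))
            ENNReal.summable]
          rw [if_neg (by omega : ¬ n+1 ≤ 0), mul_zero, zero_add]
  -- componentwise bound for Φ f itself
  have hzb : ∀ k : ℕ, ENNReal.ofReal ((2:ℝ) ^ ((k:ℝ)*s) * NF (Φ f k))
      ≤ bE 0 k + ENNReal.ofReal ((2:ℝ) ^ ((k:ℝ)*s) * NF (Φ (smoothS 0 f) k)) := by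
    intro k
    have hreal : (2:ℝ) ^ ((k:ℝ)*s) * NF (Φ f k)
        ≤ (2:ℝ) ^ ((k:ℝ)*s) * NF ((Φ f - Φ (smoothS 0 f)) k)
          + (2:ℝ) ^ ((k:ℝ)*s) * NF (Φ (smoothS 0 f) k) := by
      rw [← mul_add]
      apply mul_le_mul_of_nonneg_left _ (hpow_pos _).le
      have hdec : Φ f k = (Φ f - Φ (smoothS 0 f)) k + Φ (smoothS 0 f) k := by
        simp [Pi.sub_apply]
      rw [hdec]
      exact hNF.add_le _ _
    exact le_trans (ENNReal.ofReal_le_ofReal hreal) ENNReal.ofReal_add_le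
  have hy_le : ∀ k : ℕ, ENNReal.ofReal ((2:ℝ) ^ ((k:ℝ)*s) * NF (Φ (smoothS 0 f) k))
      ≤ ENNReal.ofReal (C₁ * v 0) * ρ₁ ^ k := by
    intro k
    rw [hρ₁Edef, ← ENNReal.ofReal_pow hρ₁pos.le, ← ENNReal.ofReal_mul (mul_nonneg hC₁.le (hv_nn 0))]
    apply ENNReal.ofReal_le_ofReal
    have e1 : (2:ℝ) ^ ((k:ℝ)*s) = ρ₁ᵣ ^ k * (2:ℝ) ^ ((k:ℝ)*s₁) := by
      rw [hρ₁def, ← Real.rpow_natCast ((2:ℝ) ^ (s-s₁)) k,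
        ← Real.rpow_mul (le_of_lt two_pos), ← Real.rpow_add two_pos]
      congr 1
      ring
    calc (2:ℝ) ^ ((k:ℝ)*s) * NF (Φ (smoothS 0 f) k)
        = ρ₁ᵣ ^ k * ((2:ℝ) ^ ((k:ℝ)*s₁) * NF (Φ (smoothS 0 f) k)) := by
          rw [e1, mul_assoc]
      _ ≤ ρ₁ᵣ ^ k * (C₁ * v 0) :=
          mul_le_mul_of_nonneg_left (htame_comp 0 k) (pow_nonneg hρ₁pos.le _)
      _ = C₁ * v 0 * ρ₁ᵣ ^ k := by ring
  by_cases hqT : q = ⊤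
  · -- case q = ∞
    subst hqT
    have hfmem' : Tendsto (fun k : ℕ => (2:ℝ) ^ ((k:ℝ)*s) * NE (f k)) atTop (nhds 0) := by
      have h := hfmem
      unfold memSigma at h
      rwa [if_pos rfl] at h
    have hA0 : Tendsto A atTop (nhds 0) := by
      have h := ENNReal.tendsto_ofReal (a := (0:ℝ)) hfmem'
      rwa [ENNReal.ofReal_zero] at h
    have hWE0 : Tendsto (fun t => ENNReal.ofReal (W t)) atTop (nhds 0) := by
      have hconv := aux_conv_null hρ₁E1 hA_ne_top hA0
      exact tendsto_of_tendsto_of_tendsto_of_le_of_le tendsto_const_nhds hconv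
        (fun t => zero_le) hWE_le_conv
    have hΓE0 : Tendsto ΓE atTop (nhds 0) := by
      have h := Tendsto.add hA0 hWE0
      rw [add_zero] at h
      exact h.congr (fun t => (hΓE_eq t).symm)
    -- part 1
    have hΦf_mem : memSigma NF s ⊤ (Φ f) := by
      unfold memSigma
      rw [if_pos rfl]
      have hznull : Tendsto
          (fun k : ℕ => ENNReal.ofReal ((2:ℝ) ^ ((k:ℝ)*s) * NF (Φ f k))) atTop (nhds 0) := by
        have h1 : Tendsto (fun k => bE 0 k) atTop (nhds 0) := by
          have hΓ'null : Tendsto (fun t => if 1 ≤ t then ΓE t else 0) atTop (nhds 0) := by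
            apply tendsto_of_tendsto_of_tendsto_of_le_of_le tendsto_const_nhds hΓE0
              (fun t => zero_le)
            intro t
            by_cases h : 1 ≤ t
            · simp [h]
            · simp [h]
          have hΨnull : Tendsto (fun k => Ψ 1 k) atTop (nhds 0) :=
            aux_conv_null hρE (fun t => by
              by_cases h : 1 ≤ t
              · simp only [if_pos h]; exact hΓE_ne_top t
              · simp only [if_neg h]; exact ENNReal.zero_ne_top) hΓ'null
          have h2 := ENNReal.Tendsto.const_mul (a := ENNReal.ofReal Cb) hΨnull
            (Or.inr ENNReal.ofReal_ne_top)
          rw [mul_zero] at h2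
          exact tendsto_of_tendsto_of_tendsto_of_le_of_le tendsto_const_nhds h2
            (fun k => zero_le) (fun k => hmaster 0 k)
        have h2 : Tendsto
            (fun k : ℕ => ENNReal.ofReal ((2:ℝ) ^ ((k:ℝ)*s) * NF (Φ (smoothS 0 f) k)))
            atTop (nhds 0) := by
          have hgeo : Tendsto (fun k : ℕ => ENNReal.ofReal (C₁ * v 0) * ρ₁ ^ k)
              atTop (nhds 0) := by
            have h3 := ENNReal.Tendsto.const_mul (a := ENNReal.ofReal (C₁ * v 0))
              (ENNReal.tendsto_pow_atTop_nhds_zero_of_lt_one hρ₁E1)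
              (Or.inr ENNReal.ofReal_ne_top)
            rwa [mul_zero] at h3
          exact tendsto_of_tendsto_of_tendsto_of_le_of_le tendsto_const_nhds hgeo
            (fun k => zero_le) hy_le
        have hsum := Tendsto.add h1 h2
        rw [add_zero] at hsum
        exact tendsto_of_tendsto_of_tendsto_of_le_of_le tendsto_const_nhds hsum
          (fun k => zero_le) hzb
      have h3 : ∀ k : ℕ, ((ENNReal.ofReal ((2:ℝ) ^ ((k:ℝ)*s) * NF (Φ f k))).toReal)
          = (2:ℝ) ^ ((k:ℝ)*s) * NF (Φ f k) := fun k =>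
        ENNReal.toReal_ofReal (mul_nonneg (hpow_pos _).le (hNF.nonneg _))
      have h4 := (ENNReal.tendsto_toReal (a := 0) (by simp)).comp hznull
      rw [ENNReal.toReal_zero] at h4
      exact Tendsto.congr h3 h4
    -- part 3
    have hpart3 : Tendsto (fun n : ℕ => sigmaNorm NF s ⊤ (Φ f - Φ (smoothS n f)))
        atTop (nhds 0) := by
      have hc2_ne_top : (2 * (1 - ρ)⁻¹ : ℝ≥0∞) ≠ ⊤ :=
        ENNReal.mul_ne_top (by simp)
          (by rw [ENNReal.inv_ne_top]; exact (tsub_pos_of_lt hρE).ne')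
      have hTailSup : ∀ N k : ℕ, Ψ N k
          ≤ (2 * (1 - ρ)⁻¹) * ⨆ t, (if N ≤ t then ΓE t else 0) := by
        intro N k
        calc Ψ N k ≤ ∑' t, ρ ^ (Nat.dist k t) * (⨆ t', (if N ≤ t' then ΓE t' else 0)) := by
              apply ENNReal.tsum_le_tsum
              intro t
              exact mul_le_mul_right (le_iSup (fun t' => if N ≤ t' then ΓE t' else 0) t) _
          _ = (∑' t, ρ ^ (Nat.dist k t)) * ⨆ t', (if N ≤ t' then ΓE t' else 0) :=
              ENNReal.tsum_mul_right
          _ ≤ (2 * (1 - ρ)⁻¹) * ⨆ t', (if N ≤ t' then ΓE t' else 0) :=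
              mul_le_mul_left (aux_kernel_tsum_le ρ k) _
      have hsup0 : Tendsto (fun N : ℕ => ⨆ t, (if N ≤ t then ΓE t else 0)) atTop (nhds 0) := by
        rw [ENNReal.tendsto_atTop_zero]
        intro ε hε
        rw [ENNReal.tendsto_atTop_zero] at hΓE0
        obtain ⟨N₀, hN₀⟩ := hΓE0 ε hε
        refine ⟨N₀, fun N hN => ?_⟩
        apply iSup_le
        intro t
        by_cases h : N ≤ t
        · rw [if_pos h]
          exact hN₀ t (le_trans hN h)
        · rw [if_neg h]
          exact zero_le
      have hub : ∀ n : ℕ, sigmaNorm NF s ⊤ (Φ f - Φ (smoothS n f))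
          ≤ ENNReal.ofReal Cb
            * ((2 * (1 - ρ)⁻¹) * ⨆ t, (if n+1 ≤ t then ΓE t else 0)) := by
        intro n
        rw [aux_sigmaNorm_top]
        apply iSup_le
        intro k
        exact le_trans (hmaster n k) (mul_le_mul_right (hTailSup (n+1) k) _)
      have hlim : Tendsto (fun n : ℕ => ENNReal.ofReal Cb
          * ((2 * (1 - ρ)⁻¹) * ⨆ t, (if n+1 ≤ t then ΓE t else 0))) atTop (nhds 0) := by
        have h1 := hsup0.comp (tendsto_add_atTop_nat 1)
        have h2 := ENNReal.Tendsto.const_mul (a := (2 * (1 - ρ)⁻¹ : ℝ≥0∞)) h1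
          (Or.inr hc2_ne_top)
        rw [mul_zero] at h2
        have h3 := ENNReal.Tendsto.const_mul (a := ENNReal.ofReal Cb) h2
          (Or.inr ENNReal.ofReal_ne_top)
        rwa [mul_zero] at h3
      exact tendsto_of_tendsto_of_tendsto_of_le_of_le tendsto_const_nhds hlim
        (fun n => zero_le) hub
    exact ⟨hΦf_mem, fun n => ⟨hSmem n, hSball n⟩, hpart3⟩
  · -- case q < ∞
    have hp1 : 1 ≤ q.toReal := by
      rw [← ENNReal.toReal_one]
      exact ENNReal.toReal_mono hqT hq
    have hp0 : (0:ℝ) < q.toReal := one_pos.trans_le hp1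
    have h1p : (0:ℝ) < 1/q.toReal := by positivity
    have hsumA : (∑' k, A k ^ q.toReal) ≠ ⊤ := by
      intro h
      have hfb := hfball
      unfold sigmaNorm at hfb
      rw [if_neg hqT] at hfb
      have : (∑' k : ℕ, ENNReal.ofReal ((2:ℝ) ^ ((k:ℝ)*s) * NE (f k)) ^ q.toReal)
          = (⊤ : ℝ≥0∞) := h
      rw [this, ENNReal.top_rpow_of_pos h1p] at hfb
      exact not_top_lt hfb
    -- the ℓ^p norm of Γ is finite
    have hNpW : (∑' t, ENNReal.ofReal (W t) ^ q.toReal) ^ (1/q.toReal)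
        ≤ (2 * (1 - ρ₁)⁻¹) * (∑' t, A t ^ q.toReal) ^ (1/q.toReal) := by
      refine le_trans ?_ (aux_young_sum hp1 ρ₁ A)
      apply ENNReal.rpow_le_rpow _ h1p.le
      apply ENNReal.tsum_le_tsum
      intro t
      exact ENNReal.rpow_le_rpow (hWE_le_conv t) hp0.le
    have hNpA_fin : (∑' t, A t ^ q.toReal) ^ (1/q.toReal) ≠ ⊤ :=
      (ENNReal.rpow_lt_top_of_nonneg h1p.le hsumA).ne
    have hNpΓ_fin : (∑' t, ΓE t ^ q.toReal) ≠ ⊤ := by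
      have h1 : (∑' t, ΓE t ^ q.toReal) ^ (1/q.toReal)
          ≤ (∑' t, A t ^ q.toReal) ^ (1/q.toReal)
            + (2 * (1 - ρ₁)⁻¹) * (∑' t, A t ^ q.toReal) ^ (1/q.toReal) := by
        calc (∑' t, ΓE t ^ q.toReal) ^ (1/q.toReal)
            = (∑' t, (A t + ENNReal.ofReal (W t)) ^ q.toReal) ^ (1/q.toReal) := by
              congr 1
              apply tsum_congr
              intro t
              rw [hΓE_eq t]
          _ ≤ (∑' t, A t ^ q.toReal) ^ (1/q.toReal)
              + (∑' t, ENNReal.ofReal (W t) ^ q.toReal) ^ (1/q.toReal) :=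
              aux_Lp_add_tsum hp1 _ _
          _ ≤ _ := add_le_add le_rfl hNpW
      have h2 : (∑' t, ΓE t ^ q.toReal) ^ (1/q.toReal) ≠ ⊤ := by
        apply ne_top_of_le_ne_top _ h1
        apply ENNReal.add_ne_top.mpr
        refine ⟨hNpA_fin, ENNReal.mul_ne_top (ENNReal.mul_ne_top (by simp) ?_) hNpA_fin⟩
        rw [ENNReal.inv_ne_top]
        exact (tsub_pos_of_lt hρ₁E1).ne'
      intro h
      rw [h, ENNReal.top_rpow_of_pos h1p] at h2
      exact h2 rfl
    -- tail of Γ^p tends to zero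
    have hΓtail : Tendsto (fun N => ∑' t, (if N ≤ t then ΓE t ^ q.toReal else 0))
        atTop (nhds 0) := aux_tail_tendsto hNpΓ_fin
    have hNptail : Tendsto
        (fun N => (∑' t, (if N ≤ t then ΓE t else 0) ^ q.toReal) ^ (1/q.toReal))
        atTop (nhds 0) := by
      have hcong : ∀ N : ℕ, (∑' t, (if N ≤ t then ΓE t else 0) ^ q.toReal)
          = ∑' t, (if N ≤ t then ΓE t ^ q.toReal else 0) := by
        intro N
        apply tsum_congr
        intro t
        by_cases h : N ≤ t
        · rw [if_pos h, if_pos h]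
        · rw [if_neg h, if_neg h, ENNReal.zero_rpow_of_pos hp0]
      have h1 := aux_rpow_tendsto_zero hΓtail h1p
      exact Tendsto.congr (fun N => by rw [hcong N]) h1
    -- part 3
    have hub : ∀ n : ℕ, sigmaNorm NF s q (Φ f - Φ (smoothS n f))
        ≤ ENNReal.ofReal Cb * ((2 * (1 - ρ)⁻¹)
          * (∑' t, (if n+1 ≤ t then ΓE t else 0) ^ q.toReal) ^ (1/q.toReal)) := by
      intro n
      have h0 : sigmaNorm NF s q (Φ f - Φ (smoothS n f))
          = (∑' k, bE n k ^ q.toReal) ^ (1/q.toReal) := by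
        unfold sigmaNorm
        rw [if_neg hqT]
      rw [h0]
      calc (∑' k, bE n k ^ q.toReal) ^ (1/q.toReal)
          ≤ (∑' k, (ENNReal.ofReal Cb * Ψ (n+1) k) ^ q.toReal) ^ (1/q.toReal) := by
            apply ENNReal.rpow_le_rpow _ h1p.le
            exact ENNReal.tsum_le_tsum fun k =>
              ENNReal.rpow_le_rpow (hmaster n k) hp0.le
        _ = ENNReal.ofReal Cb * (∑' k, Ψ (n+1) k ^ q.toReal) ^ (1/q.toReal) :=
            aux_Np_const_mul hp0 _ _
        _ ≤ ENNReal.ofReal Cb * ((2 * (1 - ρ)⁻¹)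
              * (∑' t, (if n+1 ≤ t then ΓE t else 0) ^ q.toReal) ^ (1/q.toReal)) := by
            apply mul_le_mul_right
            exact aux_young_sum hp1 ρ (fun t => if n+1 ≤ t then ΓE t else 0)
    have hc2_ne_top : (2 * (1 - ρ)⁻¹ : ℝ≥0∞) ≠ ⊤ :=
      ENNReal.mul_ne_top (by simp)
        (by rw [ENNReal.inv_ne_top]; exact (tsub_pos_of_lt hρE).ne')
    have hpart3 : Tendsto (fun n : ℕ => sigmaNorm NF s q (Φ f - Φ (smoothS n f)))
        atTop (nhds 0) := by
      have h1 := hNptail.comp (tendsto_add_atTop_nat 1)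
      have h2 := ENNReal.Tendsto.const_mul (a := (2 * (1 - ρ)⁻¹ : ℝ≥0∞)) h1
        (Or.inr hc2_ne_top)
      rw [mul_zero] at h2
      have h3 := ENNReal.Tendsto.const_mul (a := ENNReal.ofReal Cb) h2
        (Or.inr ENNReal.ofReal_ne_top)
      rw [mul_zero] at h3
      exact tendsto_of_tendsto_of_tendsto_of_le_of_le tendsto_const_nhds h3
        (fun n => zero_le) hub
    -- part 1
    have hΦf_mem : memSigma NF s q (Φ f) := by
      unfold memSigma
      rw [if_neg hqT]
      unfold sigmaNorm
      rw [if_neg hqT]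
      have hNpb0 : (∑' k, bE 0 k ^ q.toReal) ^ (1/q.toReal) ≠ ⊤ := by
        have h0 : sigmaNorm NF s q (Φ f - Φ (smoothS 0 f))
            = (∑' k, bE 0 k ^ q.toReal) ^ (1/q.toReal) := by
          unfold sigmaNorm
          rw [if_neg hqT]
        have h1 : (∑' t, (if 0+1 ≤ t then ΓE t else 0) ^ q.toReal) ^ (1/q.toReal)
            ≤ (∑' t, ΓE t ^ q.toReal) ^ (1/q.toReal) := by
          apply ENNReal.rpow_le_rpow _ h1p.le
          apply ENNReal.tsum_le_tsum
          intro t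
          apply ENNReal.rpow_le_rpow _ hp0.le
          by_cases h : 0+1 ≤ t
          · rw [if_pos h]
          · rw [if_neg h]; exact zero_le
        have h2 := le_trans (h0 ▸ hub 0) (mul_le_mul_right (mul_le_mul_right h1 _) _)
        apply ne_top_of_le_ne_top _ h2
        exact ENNReal.mul_ne_top ENNReal.ofReal_ne_top
          (ENNReal.mul_ne_top hc2_ne_top
            (ENNReal.rpow_lt_top_of_nonneg h1p.le hNpΓ_fin).ne)
      have hNpy : (∑' k : ℕ, (ENNReal.ofReal (C₁ * v 0) * ρ₁ ^ k) ^ q.toReal) ^ (1/q.toReal)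
          ≠ ⊤ := by
        rw [aux_Np_const_mul hp0]
        apply ENNReal.mul_ne_top ENNReal.ofReal_ne_top
        have hgeo : (∑' k : ℕ, (ρ₁ ^ k) ^ q.toReal) = (1 - ρ₁ ^ q.toReal)⁻¹ := by
          have h1 : ∀ k : ℕ, ((ρ₁ : ℝ≥0∞) ^ k) ^ q.toReal = (ρ₁ ^ q.toReal) ^ k := by
            intro k
            rw [← ENNReal.rpow_natCast ρ₁ k, ← ENNReal.rpow_mul, mul_comm,
              ENNReal.rpow_mul, ENNReal.rpow_natCast]
          rw [tsum_congr h1, ENNReal.tsum_geometric]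
        rw [hgeo]
        apply (ENNReal.rpow_lt_top_of_nonneg h1p.le ?_).ne
        rw [ENNReal.inv_ne_top]
        exact (tsub_pos_of_lt (ENNReal.rpow_lt_one hρ₁E1 hp0)).ne'
      calc (∑' k : ℕ, ENNReal.ofReal ((2:ℝ) ^ ((k:ℝ)*s) * NF (Φ f k)) ^ q.toReal)
            ^ (1/q.toReal)
          ≤ (∑' k : ℕ, (bE 0 k
              + ENNReal.ofReal ((2:ℝ) ^ ((k:ℝ)*s) * NF (Φ (smoothS 0 f) k))) ^ q.toReal)
            ^ (1/q.toReal) := by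
            apply ENNReal.rpow_le_rpow _ h1p.le
            exact ENNReal.tsum_le_tsum fun k => ENNReal.rpow_le_rpow (hzb k) hp0.le
        _ ≤ (∑' k, bE 0 k ^ q.toReal) ^ (1/q.toReal)
            + (∑' k : ℕ, ENNReal.ofReal ((2:ℝ) ^ ((k:ℝ)*s) * NF (Φ (smoothS 0 f) k))
                ^ q.toReal) ^ (1/q.toReal) := aux_Lp_add_tsum hp1 _ _
        _ ≤ (∑' k, bE 0 k ^ q.toReal) ^ (1/q.toReal)
            + (∑' k : ℕ, (ENNReal.ofReal (C₁ * v 0) * ρ₁ ^ k) ^ q.toReal) ^ (1/q.toReal) := by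
            apply add_le_add_right
            apply ENNReal.rpow_le_rpow _ h1p.le
            exact ENNReal.tsum_le_tsum fun k => ENNReal.rpow_le_rpow (hy_le k) hp0.le
        _ < ⊤ := by
            rw [lt_top_iff_ne_top]
            exact ENNReal.add_ne_top.mpr ⟨hNpb0, hNpy⟩
    exact ⟨hΦf_mem, fun n => ⟨hSmem n, hSball n⟩, hpart3⟩
end

section
/- Let (F,‖·‖_F) be a pseudo-normed real vector space and s_0 < s_1 real numbers. For all s ∈ (s_0,s_1) and all q ∈ [1,∞] there exists a constant C > 0 such that for all f ∈ Σ^{s_1}_∞(F): ‖f‖_{Σ^s_q} ≤ C ‖f‖_{Σ^{s_0}_∞}^θ ‖f‖_{Σ^{s_1}_∞}^{1−θ}, where θ = (s_1 − s)/(s_1 − s_0); in particular f ∈ Σ^s_q(F). -/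
open Filter
open scoped ENNReal NNReal

private lemma aux_pow (x : ℝ) (k : ℕ) : (2:ℝ) ^ ((k:ℝ) * x) = ((2:ℝ) ^ x) ^ k := by
  rw [mul_comm, Real.rpow_mul (by norm_num : (0:ℝ) ≤ 2), Real.rpow_natCast]

private lemma aux_split (u v t n : ℝ) :
    (2:ℝ) ^ (t * u) * n = (2:ℝ) ^ (t * (u - v)) * ((2:ℝ) ^ (t * v) * n) := by
  rw [← mul_assoc, ← Real.rpow_add (by norm_num : (0:ℝ) < 2),
    show t * (u - v) + t * v = t * u by ring]

private lemma aux_interp (s₀ s₁ s θ : ℝ) (hθ0 : 0 < θ) (hθ1 : θ < 1)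
    (hsum : θ * s₀ + (1 - θ) * s₁ = s) (t n : ℝ) (hn : 0 ≤ n) :
    (2:ℝ) ^ (t * s) * n = ((2:ℝ) ^ (t * s₀) * n) ^ θ * ((2:ℝ) ^ (t * s₁) * n) ^ (1 - θ) := by
  rcases hn.eq_or_lt with h | h
  · rw [← h, mul_zero, mul_zero, mul_zero, Real.zero_rpow hθ0.ne',
      Real.zero_rpow (by intro hc; linarith [sub_eq_zero.mp hc] : (1:ℝ) - θ ≠ 0), mul_zero]
  · rw [Real.mul_rpow (Real.rpow_nonneg (by norm_num) _) h.le,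
      Real.mul_rpow (Real.rpow_nonneg (by norm_num) _) h.le,
      ← Real.rpow_mul (by norm_num : (0:ℝ) ≤ 2), ← Real.rpow_mul (by norm_num : (0:ℝ) ≤ 2),
      mul_mul_mul_comm, ← Real.rpow_add (by norm_num : (0:ℝ) < 2), ← Real.rpow_add h,
      show t * s₀ * θ + t * s₁ * (1 - θ) = t * s from by linear_combination t * hsum,
      show θ + (1 - θ) = (1:ℝ) from by ring, Real.rpow_one]

/-- Lemma 3.11 (interpolation inequality): for `s₀ < s < s₁` and `q ∈ [1,∞]` there is a
constant `C > 0` such that for every `f ∈ Σ^{s₁}_∞(F)`,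
`‖f‖_{Σ^s_q} ≤ C ‖f‖_{Σ^{s₀}_∞}^θ ‖f‖_{Σ^{s₁}_∞}^{1-θ}` with `θ = (s₁-s)/(s₁-s₀)`;
in particular `f ∈ Σ^s_q(F)`. -/
theorem sigmaNorm_interpolation {F : Type*} [AddCommGroup F] [Module ℝ F]
    (N : F → ℝ) (hN : IsPseudoNorm N) (s₀ s₁ : ℝ) (h : s₀ < s₁)
    (s : ℝ) (hs₀ : s₀ < s) (hs₁ : s < s₁) (q : ℝ≥0∞) (hq : 1 ≤ q) :
    ∃ C : ℝ, 0 < C ∧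
      ∀ f : ℕ → F, memSigma N s₁ ⊤ f →
        sigmaNorm N s q f ≤ ENNReal.ofReal C *
            sigmaNorm N s₀ ⊤ f ^ ((s₁ - s) / (s₁ - s₀)) *
            sigmaNorm N s₁ ⊤ f ^ (1 - (s₁ - s) / (s₁ - s₀)) ∧
        memSigma N s q f := by
  classical
  have hd : (0:ℝ) < s₁ - s₀ := by linarith
  set θ : ℝ := (s₁ - s) / (s₁ - s₀) with hθdef
  have hθ0 : 0 < θ := div_pos (by linarith) hd
  have hθ1 : θ < 1 := (div_lt_one hd).2 (by linarith)
  have hθsum : θ * s₀ + (1 - θ) * s₁ = s := by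
    rw [hθdef]; field_simp; ring
  have hθd1 : (1 - θ) * (s₁ - s₀) = s - s₀ := by
    rw [hθdef]; field_simp; ring
  have hθd2 : θ * (s₁ - s₀) = s₁ - s := by
    rw [hθdef]; field_simp
  by_cases hq' : q = ⊤
  · subst hq'
    refine ⟨1, one_pos, fun f hf => ?_⟩
    have htend : Tendsto (fun k : ℕ => (2:ℝ) ^ ((k:ℝ) * s₁) * N (f k)) atTop (nhds 0) := by
      simpa [memSigma] using hf
    have hN0 : ∀ k, (0:ℝ) ≤ N (f k) := fun k => hN.nonneg _
    constructor
    · rw [show sigmaNorm N s ⊤ f = ⨆ k : ℕ, ENNReal.ofReal ((2:ℝ) ^ ((k:ℝ) * s) * N (f k)) from by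
        simp [sigmaNorm]]
      rw [ENNReal.ofReal_one, one_mul]
      have hM₀ : sigmaNorm N s₀ ⊤ f = ⨆ k : ℕ, ENNReal.ofReal ((2:ℝ) ^ ((k:ℝ) * s₀) * N (f k)) := by
        simp [sigmaNorm]
      have hM₁ : sigmaNorm N s₁ ⊤ f = ⨆ k : ℕ, ENNReal.ofReal ((2:ℝ) ^ ((k:ℝ) * s₁) * N (f k)) := by
        simp [sigmaNorm]
      refine iSup_le fun k => ?_
      rw [aux_interp s₀ s₁ s θ hθ0 hθ1 hθsum (k:ℝ) (N (f k)) (hN0 k),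
        ENNReal.ofReal_mul (Real.rpow_nonneg (mul_nonneg (Real.rpow_nonneg (by norm_num) _) (hN0 k)) _),
        ← ENNReal.ofReal_rpow_of_nonneg (mul_nonneg (Real.rpow_nonneg (by norm_num) _) (hN0 k)) hθ0.le,
        ← ENNReal.ofReal_rpow_of_nonneg (mul_nonneg (Real.rpow_nonneg (by norm_num) _) (hN0 k))
          (by linarith : (0:ℝ) ≤ 1 - θ)]
      exact mul_le_mul' (ENNReal.rpow_le_rpow ((le_iSup _ k).trans_eq hM₀.symm) hθ0.le)
        (ENNReal.rpow_le_rpow ((le_iSup _ k).trans_eq hM₁.symm) (by linarith))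
    · simp only [memSigma, if_pos rfl]
      refine squeeze_zero (fun k => mul_nonneg (by positivity) (hN0 k)) (fun k => ?_) htend
      exact mul_le_mul_of_nonneg_right
        (Real.rpow_le_rpow_of_exponent_le one_le_two
          (mul_le_mul_of_nonneg_left hs₁.le (Nat.cast_nonneg k))) (hN0 k)
  · -- q ≠ ⊤
    have hq0 : q ≠ 0 := fun h0 => by simp [h0] at hq
    have hr0 : 0 < q.toReal := ENNReal.toReal_pos hq0 hq'
    set r := q.toReal with hrdef
    set ρ : ℝ := (2:ℝ) ^ ((s - s₀) * r) with hρdef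
    set β : ℝ := (2:ℝ) ^ ((s - s₁) * r) with hβdef
    have hρ1 : 1 < ρ := by
      rw [hρdef]
      exact (Real.one_lt_rpow_iff_of_pos (by norm_num)).2
        (Or.inl ⟨one_lt_two, mul_pos (by linarith) hr0⟩)
    have hβ0 : 0 < β := Real.rpow_pos_of_pos (by norm_num) _
    have hβ1 : β < 1 := by
      rw [hβdef]
      exact Real.rpow_lt_one_of_one_lt_of_neg one_lt_two (mul_neg_of_neg_of_pos (by linarith) hr0)
    set C₁ : ℝ := (ρ - 1)⁻¹ * (2:ℝ) ^ ((s₁ - s₀) * ((1 - θ) * r)) with hC₁def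
    set C₂ : ℝ := (1 - β)⁻¹ with hC₂def
    have hC₁ : 0 < C₁ := mul_pos (inv_pos.2 (by linarith)) (Real.rpow_pos_of_pos (by norm_num) _)
    have hC₂ : 0 < C₂ := inv_pos.2 (by linarith)
    refine ⟨max 1 ((C₁ + C₂) ^ (1/r)), lt_of_lt_of_le one_pos (le_max_left _ _), fun f hf => ?_⟩
    have htend : Tendsto (fun k : ℕ => (2:ℝ) ^ ((k:ℝ) * s₁) * N (f k)) atTop (nhds 0) := by
      simpa [memSigma] using hf
    have hN0 : ∀ k, (0:ℝ) ≤ N (f k) := fun k => hN.nonneg _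
    set M₀ := sigmaNorm N s₀ ⊤ f with hM₀def
    set M₁ := sigmaNorm N s₁ ⊤ f with hM₁def
    have hM₀sup : M₀ = ⨆ k : ℕ, ENNReal.ofReal ((2:ℝ) ^ ((k:ℝ) * s₀) * N (f k)) := by
      rw [hM₀def]; simp [sigmaNorm]
    have hM₁sup : M₁ = ⨆ k : ℕ, ENNReal.ofReal ((2:ℝ) ^ ((k:ℝ) * s₁) * N (f k)) := by
      rw [hM₁def]; simp [sigmaNorm]
    have hM₁top : M₁ ≠ ⊤ := by
      obtain ⟨B, hB⟩ := htend.bddAbove_range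
      refine ne_top_of_le_ne_top (b := ENNReal.ofReal B) ENNReal.ofReal_ne_top ?_
      rw [hM₁sup]
      exact iSup_le fun k => ENNReal.ofReal_le_ofReal (hB ⟨k, rfl⟩)
    have hM₀₁ : M₀ ≤ M₁ := by
      rw [hM₀sup, hM₁sup]
      exact iSup_mono fun k => ENNReal.ofReal_le_ofReal
        (mul_le_mul_of_nonneg_right (Real.rpow_le_rpow_of_exponent_le one_le_two
          (mul_le_mul_of_nonneg_left h.le (Nat.cast_nonneg k))) (hN0 k))
    have hM₀top : M₀ ≠ ⊤ := ne_top_of_le_ne_top hM₁top hM₀₁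
    have hα : ∀ k : ℕ, (0:ℝ) ≤ (2:ℝ) ^ ((k:ℝ) * s) * N (f k) :=
      fun k => mul_nonneg (Real.rpow_nonneg (by norm_num) _) (hN0 k)
    have hmain : sigmaNorm N s q f ≤
        ENNReal.ofReal (max 1 ((C₁ + C₂) ^ (1/r))) * M₀ ^ θ * M₁ ^ (1 - θ) := by
      rw [show sigmaNorm N s q f
          = (∑' k : ℕ, ENNReal.ofReal ((2:ℝ) ^ ((k:ℝ) * s) * N (f k)) ^ r) ^ (1/r) from by
        rw [sigmaNorm, if_neg hq']]
      by_cases hM0 : M₀ = 0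
      · have hNf : ∀ k : ℕ, N (f k) = 0 := by
          intro k
          have hle := le_iSup (fun k : ℕ => ENNReal.ofReal ((2:ℝ) ^ ((k:ℝ) * s₀) * N (f k))) k
          rw [← hM₀sup, hM0] at hle
          have h0 := ENNReal.ofReal_eq_zero.1 (le_antisymm hle zero_le)
          have h2p := Real.rpow_pos_of_pos (by norm_num : (0:ℝ) < 2) ((k:ℝ) * s₀)
          nlinarith [hN0 k]
        have hz : ∀ k : ℕ, ENNReal.ofReal ((2:ℝ) ^ ((k:ℝ) * s) * N (f k)) ^ r = 0 := by
          intro k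
          rw [hNf k, mul_zero, ENNReal.ofReal_zero, ENNReal.zero_rpow_of_pos hr0]
        simp only [hz, tsum_zero]
        rw [ENNReal.zero_rpow_of_pos (by positivity)]
        exact zero_le
      · set m₀ := M₀.toReal with hm₀def
        set m₁ := M₁.toReal with hm₁def
        have hm₀ : 0 < m₀ := ENNReal.toReal_pos hM0 hM₀top
        have hm₁ : 0 < m₁ := lt_of_lt_of_le hm₀ (ENNReal.toReal_mono hM₁top hM₀₁)
        have hM₀eq : ENNReal.ofReal m₀ = M₀ := ENNReal.ofReal_toReal hM₀top
        have hM₁eq : ENNReal.ofReal m₁ = M₁ := ENNReal.ofReal_toReal hM₁top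
        have hb : ∀ k : ℕ, (2:ℝ) ^ ((k:ℝ) * s₀) * N (f k) ≤ m₀ := by
          intro k
          have hle := le_iSup (fun k : ℕ => ENNReal.ofReal ((2:ℝ) ^ ((k:ℝ) * s₀) * N (f k))) k
          rw [← hM₀sup, ← hM₀eq] at hle
          exact (ENNReal.ofReal_le_ofReal_iff hm₀.le).1 hle
        have hc : ∀ k : ℕ, (2:ℝ) ^ ((k:ℝ) * s₁) * N (f k) ≤ m₁ := by
          intro k
          have hle := le_iSup (fun k : ℕ => ENNReal.ofReal ((2:ℝ) ^ ((k:ℝ) * s₁) * N (f k))) k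
          rw [← hM₁sup, ← hM₁eq] at hle
          exact (ENNReal.ofReal_le_ofReal_iff hm₁.le).1 hle
        have hαb : ∀ k : ℕ, (2:ℝ) ^ ((k:ℝ) * s) * N (f k) ≤ (2:ℝ) ^ ((k:ℝ) * (s - s₀)) * m₀ := by
          intro k
          rw [aux_split s s₀ (k:ℝ) (N (f k))]
          exact mul_le_mul_of_nonneg_left (hb k) (Real.rpow_nonneg (by norm_num) _)
        have hαc : ∀ k : ℕ, (2:ℝ) ^ ((k:ℝ) * s) * N (f k) ≤ (2:ℝ) ^ ((k:ℝ) * (s - s₁)) * m₁ := by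
          intro k
          rw [aux_split s s₁ (k:ℝ) (N (f k))]
          exact mul_le_mul_of_nonneg_left (hc k) (Real.rpow_nonneg (by norm_num) _)
        have h2d1 : (1:ℝ) < (2:ℝ) ^ (s₁ - s₀) :=
          (Real.one_lt_rpow_iff_of_pos (by norm_num)).2 (Or.inl ⟨one_lt_two, hd⟩)
        have hex : ∃ k : ℕ, m₁ ≤ (2:ℝ) ^ ((k:ℝ) * (s₁ - s₀)) * m₀ := by
          obtain ⟨k, hk⟩ := ((tendsto_pow_atTop_atTop_of_one_lt h2d1).eventually_ge_atTop
            (m₁ / m₀)).exists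
          exact ⟨k, by rw [aux_pow]; exact (div_le_iff₀ hm₀).1 hk⟩
        set K := Nat.find hex with hKdef
        have hK : m₁ ≤ (2:ℝ) ^ ((K:ℝ) * (s₁ - s₀)) * m₀ := Nat.find_spec hex
        set Xr : ℝ := m₀ ^ (θ * r) * m₁ ^ ((1 - θ) * r) with hXrdef
        have hXr : 0 < Xr := mul_pos (Real.rpow_pos_of_pos hm₀ _) (Real.rpow_pos_of_pos hm₁ _)
        have hpt1 : ∀ k : ℕ, ((2:ℝ) ^ ((k:ℝ) * s) * N (f k)) ^ r ≤ m₀ ^ r * ρ ^ k := by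
          intro k
          calc ((2:ℝ) ^ ((k:ℝ) * s) * N (f k)) ^ r
              ≤ ((2:ℝ) ^ ((k:ℝ) * (s - s₀)) * m₀) ^ r :=
                Real.rpow_le_rpow (hα k) (hαb k) hr0.le
            _ = ((2:ℝ) ^ ((k:ℝ) * (s - s₀))) ^ r * m₀ ^ r :=
                Real.mul_rpow (Real.rpow_nonneg (by norm_num) _) hm₀.le
            _ = m₀ ^ r * ρ ^ k := by
                rw [hρdef, ← aux_pow ((s - s₀) * r) k,
                  ← Real.rpow_mul (by norm_num : (0:ℝ) ≤ 2),
                  show (k:ℝ) * (s - s₀) * r = (k:ℝ) * ((s - s₀) * r) by ring]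
                exact mul_comm _ _
        have hpt2 : ∀ k : ℕ, ((2:ℝ) ^ ((k:ℝ) * s) * N (f k)) ^ r ≤ m₁ ^ r * β ^ k := by
          intro k
          calc ((2:ℝ) ^ ((k:ℝ) * s) * N (f k)) ^ r
              ≤ ((2:ℝ) ^ ((k:ℝ) * (s - s₁)) * m₁) ^ r :=
                Real.rpow_le_rpow (hα k) (hαc k) hr0.le
            _ = ((2:ℝ) ^ ((k:ℝ) * (s - s₁))) ^ r * m₁ ^ r :=
                Real.mul_rpow (Real.rpow_nonneg (by norm_num) _) hm₁.le
            _ = m₁ ^ r * β ^ k := by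
                rw [hβdef, ← aux_pow ((s - s₁) * r) k,
                  ← Real.rpow_mul (by norm_num : (0:ℝ) ≤ 2),
                  show (k:ℝ) * (s - s₁) * r = (k:ℝ) * ((s - s₁) * r) by ring]
                exact mul_comm _ _
        have h1r : ∑ k ∈ Finset.range K, ((2:ℝ) ^ ((k:ℝ) * s) * N (f k)) ^ r ≤ C₁ * Xr := by
          rcases Nat.eq_zero_or_pos K with hK0 | hK0
          · rw [hK0]
            simp only [Finset.range_zero, Finset.sum_empty]
            exact (mul_pos hC₁ hXr).le
          · obtain ⟨K', hK'⟩ : ∃ K', K = K' + 1 := ⟨K - 1, by omega⟩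
            have hK'lt : K' < Nat.find hex := by rw [← hKdef]; omega
            have hmin : (2:ℝ) ^ ((K':ℝ) * (s₁ - s₀)) * m₀ < m₁ := not_le.1 (Nat.find_min hex hK'lt)
            have hgeom : ∑ k ∈ Finset.range K, ρ ^ k ≤ ρ ^ K * (ρ - 1)⁻¹ := by
              rw [geom_sum_eq hρ1.ne', div_eq_mul_inv]
              exact mul_le_mul_of_nonneg_right (by linarith) (inv_nonneg.2 (by linarith))
            have key : (m₁ / m₀) ^ ((1 - θ) * r) * m₀ ^ r = Xr := by
              rw [Real.div_rpow hm₁.le hm₀.le, div_mul_eq_mul_div, mul_div_assoc,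
                ← Real.rpow_sub hm₀, show r - (1 - θ) * r = θ * r by ring, hXrdef]
              exact mul_comm _ _
            have e1 : ρ ^ K = ((2:ℝ) ^ ((K:ℝ) * (s₁ - s₀))) ^ ((1 - θ) * r) := by
              rw [hρdef, ← aux_pow ((s - s₀) * r) K, ← Real.rpow_mul (by norm_num : (0:ℝ) ≤ 2)]
              congr 1
              linear_combination (-((K:ℝ) * r)) * hθd1
            have e2 : (2:ℝ) ^ ((K:ℝ) * (s₁ - s₀)) ≤ (2:ℝ) ^ (s₁ - s₀) * (m₁ / m₀) := by
              have e3 : (2:ℝ) ^ ((K:ℝ) * (s₁ - s₀))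
                  = (2:ℝ) ^ (s₁ - s₀) * (2:ℝ) ^ ((K':ℝ) * (s₁ - s₀)) := by
                rw [← Real.rpow_add (by norm_num : (0:ℝ) < 2)]
                congr 1
                rw [hK']
                push_cast
                ring
              have e4 : (2:ℝ) ^ ((K':ℝ) * (s₁ - s₀)) < m₁ / m₀ := (lt_div_iff₀ hm₀).2 hmin
              rw [e3]
              exact mul_le_mul_of_nonneg_left e4.le (Real.rpow_nonneg (by norm_num) _)
            have hρK : ρ ^ K * m₀ ^ r ≤ (2:ℝ) ^ ((s₁ - s₀) * ((1 - θ) * r)) * Xr := by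
              calc ρ ^ K * m₀ ^ r
                  = ((2:ℝ) ^ ((K:ℝ) * (s₁ - s₀))) ^ ((1 - θ) * r) * m₀ ^ r := by rw [e1]
                _ ≤ ((2:ℝ) ^ (s₁ - s₀) * (m₁ / m₀)) ^ ((1 - θ) * r) * m₀ ^ r :=
                    mul_le_mul_of_nonneg_right
                      (Real.rpow_le_rpow (Real.rpow_nonneg (by norm_num) _) e2
                        (mul_nonneg (by linarith) hr0.le))
                      (Real.rpow_nonneg hm₀.le _)
                _ = (2:ℝ) ^ ((s₁ - s₀) * ((1 - θ) * r)) * Xr := by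
                    rw [Real.mul_rpow (Real.rpow_nonneg (by norm_num) _)
                        (div_nonneg hm₁.le hm₀.le),
                      ← Real.rpow_mul (by norm_num : (0:ℝ) ≤ 2), mul_assoc, key]
            calc ∑ k ∈ Finset.range K, ((2:ℝ) ^ ((k:ℝ) * s) * N (f k)) ^ r
                ≤ ∑ k ∈ Finset.range K, m₀ ^ r * ρ ^ k :=
                  Finset.sum_le_sum fun k _ => hpt1 k
              _ = m₀ ^ r * ∑ k ∈ Finset.range K, ρ ^ k := by rw [Finset.mul_sum]
              _ ≤ m₀ ^ r * (ρ ^ K * (ρ - 1)⁻¹) :=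
                  mul_le_mul_of_nonneg_left hgeom (Real.rpow_nonneg hm₀.le _)
              _ = (ρ - 1)⁻¹ * (ρ ^ K * m₀ ^ r) := by ring
              _ ≤ (ρ - 1)⁻¹ * ((2:ℝ) ^ ((s₁ - s₀) * ((1 - θ) * r)) * Xr) :=
                  mul_le_mul_of_nonneg_left hρK (inv_nonneg.2 (by linarith))
              _ = C₁ * Xr := by rw [hC₁def]; ring
        have hβK : m₁ ^ r * β ^ K ≤ Xr := by
          have e1 : β ^ K = ((2:ℝ) ^ ((K:ℝ) * (s₁ - s₀))) ^ (-(θ * r)) := by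
            rw [hβdef, ← aux_pow ((s - s₁) * r) K, ← Real.rpow_mul (by norm_num : (0:ℝ) ≤ 2)]
            congr 1
            linear_combination (K:ℝ) * r * hθd2
          have e2 : ((2:ℝ) ^ ((K:ℝ) * (s₁ - s₀))) ^ (-(θ * r)) ≤ (m₁ / m₀) ^ (-(θ * r)) := by
            rw [Real.rpow_neg (Real.rpow_nonneg (by norm_num) _),
              Real.rpow_neg (div_nonneg hm₁.le hm₀.le)]
            refine inv_anti₀ (Real.rpow_pos_of_pos (div_pos hm₁ hm₀) _) ?_
            exact Real.rpow_le_rpow (div_nonneg hm₁.le hm₀.le) ((div_le_iff₀ hm₀).2 hK)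
              (mul_nonneg hθ0.le hr0.le)
          have e3 : m₁ ^ r * (m₁ / m₀) ^ (-(θ * r)) = Xr := by
            calc m₁ ^ r * (m₁ / m₀) ^ (-(θ * r))
                = m₁ ^ r * (m₁ ^ (-(θ * r)) * m₀ ^ (θ * r)) := by
                  rw [Real.div_rpow hm₁.le hm₀.le, div_eq_mul_inv, Real.rpow_neg hm₀.le, inv_inv]
              _ = m₀ ^ (θ * r) * m₁ ^ (r + -(θ * r)) := by
                  rw [Real.rpow_add hm₁]
                  ring
              _ = Xr := by
                  rw [show r + -(θ * r) = (1 - θ) * r by ring, hXrdef]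
          calc m₁ ^ r * β ^ K
              = m₁ ^ r * ((2:ℝ) ^ ((K:ℝ) * (s₁ - s₀))) ^ (-(θ * r)) := by rw [e1]
            _ ≤ m₁ ^ r * (m₁ / m₀) ^ (-(θ * r)) :=
                mul_le_mul_of_nonneg_left e2 (Real.rpow_nonneg hm₁.le _)
            _ = Xr := e3
        have hterm : ∀ k : ℕ,
            ((2:ℝ) ^ (((k + K : ℕ):ℝ) * s) * N (f (k + K))) ^ r ≤ Xr * β ^ k := by
          intro k
          calc ((2:ℝ) ^ (((k + K : ℕ):ℝ) * s) * N (f (k + K))) ^ r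
              ≤ m₁ ^ r * β ^ (k + K) := hpt2 (k + K)
            _ = (m₁ ^ r * β ^ K) * β ^ k := by rw [pow_add]; ring
            _ ≤ Xr * β ^ k := mul_le_mul_of_nonneg_right hβK (pow_nonneg hβ0.le k)
        have h1 : (∑ k ∈ Finset.range K, ENNReal.ofReal ((2:ℝ) ^ ((k:ℝ) * s) * N (f k)) ^ r)
            ≤ ENNReal.ofReal (C₁ * Xr) := by
          calc ∑ k ∈ Finset.range K, ENNReal.ofReal ((2:ℝ) ^ ((k:ℝ) * s) * N (f k)) ^ r
              = ∑ k ∈ Finset.range K, ENNReal.ofReal (((2:ℝ) ^ ((k:ℝ) * s) * N (f k)) ^ r) :=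
                Finset.sum_congr rfl fun k _ => ENNReal.ofReal_rpow_of_nonneg (hα k) hr0.le
            _ = ENNReal.ofReal (∑ k ∈ Finset.range K, ((2:ℝ) ^ ((k:ℝ) * s) * N (f k)) ^ r) :=
                (ENNReal.ofReal_sum_of_nonneg fun k _ => Real.rpow_nonneg (hα k) r).symm
            _ ≤ ENNReal.ofReal (C₁ * Xr) := ENNReal.ofReal_le_ofReal h1r
        have h2 : (∑' k : ℕ, ENNReal.ofReal ((2:ℝ) ^ (((k + K : ℕ):ℝ) * s) * N (f (k + K))) ^ r)
            ≤ ENNReal.ofReal (C₂ * Xr) := by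
          calc (∑' k : ℕ, ENNReal.ofReal ((2:ℝ) ^ (((k + K : ℕ):ℝ) * s) * N (f (k + K))) ^ r)
              ≤ ∑' k : ℕ, ENNReal.ofReal (Xr * β ^ k) := by
                refine ENNReal.tsum_le_tsum fun k => ?_
                rw [ENNReal.ofReal_rpow_of_nonneg (hα (k + K)) hr0.le]
                exact ENNReal.ofReal_le_ofReal (hterm k)
            _ = ∑' k : ℕ, ENNReal.ofReal Xr * ENNReal.ofReal β ^ k := by
                refine tsum_congr fun k => ?_
                rw [ENNReal.ofReal_mul hXr.le, ENNReal.ofReal_pow hβ0.le]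
            _ = ENNReal.ofReal Xr * (1 - ENNReal.ofReal β)⁻¹ := by
                rw [ENNReal.tsum_mul_left, ENNReal.tsum_geometric]
            _ = ENNReal.ofReal (C₂ * Xr) := by
                rw [show (1:ℝ≥0∞) - ENNReal.ofReal β = ENNReal.ofReal (1 - β) from by
                  rw [ENNReal.ofReal_sub 1 hβ0.le, ENNReal.ofReal_one],
                  ← ENNReal.ofReal_inv_of_pos (by linarith : (0:ℝ) < 1 - β),
                  ← ENNReal.ofReal_mul hXr.le]
                congr 1
                rw [hC₂def]
                ring
        have hsplit := (HasSum.sum_range_add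
          (f := fun n : ℕ => ENNReal.ofReal ((2:ℝ) ^ ((n:ℝ) * s) * N (f n)) ^ r) (k := K)
          ENNReal.summable.hasSum).tsum_eq
        have hsum_le : (∑' k : ℕ, ENNReal.ofReal ((2:ℝ) ^ ((k:ℝ) * s) * N (f k)) ^ r)
            ≤ ENNReal.ofReal ((C₁ + C₂) * Xr) := by
          rw [hsplit]
          refine le_trans (add_le_add h1 h2) (le_of_eq ?_)
          rw [← ENNReal.ofReal_add (mul_nonneg hC₁.le hXr.le) (mul_nonneg hC₂.le hXr.le)]
          congr 1
          ring
        calc (∑' k : ℕ, ENNReal.ofReal ((2:ℝ) ^ ((k:ℝ) * s) * N (f k)) ^ r) ^ (1/r)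
            ≤ ENNReal.ofReal ((C₁ + C₂) * Xr) ^ (1/r) :=
              ENNReal.rpow_le_rpow hsum_le (by positivity)
          _ = ENNReal.ofReal (((C₁ + C₂) * Xr) ^ (1/r)) :=
              ENNReal.ofReal_rpow_of_nonneg (mul_nonneg (add_pos hC₁ hC₂).le hXr.le)
                (by positivity)
          _ = ENNReal.ofReal ((C₁ + C₂) ^ (1/r) * (m₀ ^ θ * m₁ ^ (1 - θ))) := by
              congr 1
              rw [Real.mul_rpow (add_pos hC₁ hC₂).le hXr.le, hXrdef,
                Real.mul_rpow (Real.rpow_nonneg hm₀.le _) (Real.rpow_nonneg hm₁.le _),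
                ← Real.rpow_mul hm₀.le, ← Real.rpow_mul hm₁.le,
                show θ * r * (1/r) = θ from by field_simp,
                show (1 - θ) * r * (1/r) = 1 - θ from by field_simp]
          _ ≤ ENNReal.ofReal (max 1 ((C₁ + C₂) ^ (1/r)) * (m₀ ^ θ * m₁ ^ (1 - θ))) :=
              ENNReal.ofReal_le_ofReal (mul_le_mul_of_nonneg_right (le_max_right _ _)
                (mul_nonneg (Real.rpow_nonneg hm₀.le _) (Real.rpow_nonneg hm₁.le _)))
          _ = ENNReal.ofReal (max 1 ((C₁ + C₂) ^ (1/r))) * M₀ ^ θ * M₁ ^ (1 - θ) := by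
              rw [ENNReal.ofReal_mul (le_max_of_le_left zero_le_one),
                ENNReal.ofReal_mul (Real.rpow_nonneg hm₀.le _),
                ← ENNReal.ofReal_rpow_of_pos hm₀, ← ENNReal.ofReal_rpow_of_pos hm₁,
                hM₀eq, hM₁eq, mul_assoc]
    refine ⟨hmain, ?_⟩
    have hfin : ENNReal.ofReal (max 1 ((C₁ + C₂) ^ (1/r))) * M₀ ^ θ * M₁ ^ (1 - θ) < ⊤ :=
      ENNReal.mul_lt_top (ENNReal.mul_lt_top ENNReal.ofReal_lt_top
        (ENNReal.rpow_lt_top_of_nonneg hθ0.le hM₀top))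
        (ENNReal.rpow_lt_top_of_nonneg (by linarith) hM₁top)
    simp only [memSigma, if_neg hq']
    exact lt_of_le_of_lt hmain hfin
end
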